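/- arXiv:0903.5373 — 3 statements merged into one kernel-verified Lean document; each statement's English description precedes it below -/
import Mathlib

section
/- If P_1,...,P_m are independent with each P_i, i ∈ I_0, uniform on [0,1], and α_1 ≤ ... ≤ α_m ∈ [0,1) satisfy α_i/(1-α_i) ≤ iq/(m+1-i), then the step-down procedure with these critical values has FDR ≤ q, where FDR = E[(V/R)1_{R>0}], V = #{i ∈ I_0 : H_i rejected}, R = total rejections. -/
open MeasureTheory ProbabilityTheory

/-- Order statistics: `orderStat p k` is the (k+1)-st smallest of the values `p`. -/
noncomputable def orderStat {m : ℕ} (p : Fin m → ℝ) : Fin m → ℝ :=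
  fun k => p (Tuple.sort p k)

/-- Number of rejections of the step-down procedure with critical constants
α_1 ≤ … ≤ α_m: R(p) = max{i : p_{(j)} ≤ α_j for all j ≤ i} (0 if none). -/
noncomputable def rejCount (m : ℕ) (α : ℕ → ℝ) (p : Fin m → ℝ) : ℕ :=
  sSup {i : ℕ | i ≤ m ∧ ∀ j : Fin m, (j : ℕ) < i → orderStat p j ≤ α ((j : ℕ) + 1)}

/-- Number of falsely rejected (true null) hypotheses: H_i is rejected iff
P_i ≤ α_R, i.e. iff P_i is among the R smallest p-values. -/
noncomputable def falseRejCount (m : ℕ) (α : ℕ → ℝ) (I₀ : Finset (Fin m))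
    (p : Fin m → ℝ) : ℕ :=
  (I₀.filter fun i => p i ≤ α (rejCount m α p)).card

/-- FDR = E[(V/R) 1_{R>0}]. -/
noncomputable def FDR {Ω : Type*} [MeasurableSpace Ω] (μ : Measure Ω)
    (m : ℕ) (α : ℕ → ℝ) (I₀ : Finset (Fin m)) (P : Fin m → Ω → ℝ) : ℝ :=
  ∫ ω, (if 0 < rejCount m α (fun i => P i ω) then
    (falseRejCount m α I₀ (fun i => P i ω) : ℝ) / (rejCount m α (fun i => P i ω) : ℝ)
    else 0) ∂μ

open Finset
open scoped ENNReal

namespace SDP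

variable {m : ℕ}

/-- number of p-values ≤ t -/
noncomputable def cnt (p : Fin m → ℝ) (t : ℝ) : ℕ :=
  ∑ j, if p j ≤ t then 1 else 0

/-- number of p-values other than the i-th that are ≤ t -/
noncomputable def cntEx (p : Fin m → ℝ) (i : Fin m) (t : ℝ) : ℕ :=
  ∑ j ∈ Finset.univ.erase i, if p j ≤ t then 1 else 0

def KSet (α : ℕ → ℝ) (p : Fin m → ℝ) (i : Fin m) : Set ℕ :=
  {k : ℕ | k ≤ m ∧ ∀ j : ℕ, 1 ≤ j → j < k → j ≤ cntEx p i (α j)}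

/-- K = 1 + length of the initial run of sorted p-values (excluding coordinate i)
below the α's. -/
noncomputable def KK (α : ℕ → ℝ) (p : Fin m → ℝ) (i : Fin m) : ℕ :=
  sSup (KSet α p i)

def rejSet (α : ℕ → ℝ) (p : Fin m → ℝ) : Set ℕ :=
  {i : ℕ | i ≤ m ∧ ∀ j : Fin m, (j : ℕ) < i → orderStat p j ≤ α ((j : ℕ) + 1)}

lemma rejCount_eq (α : ℕ → ℝ) (p : Fin m → ℝ) : rejCount m α p = sSup (rejSet α p) := rfl

lemma mem_KSet {α : ℕ → ℝ} {p : Fin m → ℝ} {i : Fin m} {k : ℕ} :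
    k ∈ KSet α p i ↔ k ≤ m ∧ ∀ j : ℕ, 1 ≤ j → j < k → j ≤ cntEx p i (α j) := Iff.rfl

lemma mem_rejSet {α : ℕ → ℝ} {p : Fin m → ℝ} {k : ℕ} :
    k ∈ rejSet α p ↔ k ≤ m ∧ ∀ j : Fin m, (j : ℕ) < k → orderStat p j ≤ α ((j : ℕ) + 1) :=
  Iff.rfl

lemma cnt_eq_card (p : Fin m → ℝ) (t : ℝ) :
    cnt p t = (Finset.univ.filter fun j => p j ≤ t).card := by
  classical
  rw [Finset.card_filter]
  rfl

lemma cnt_mono (p : Fin m → ℝ) {t s : ℝ} (h : t ≤ s) : cnt p t ≤ cnt p s := by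
  classical
  refine Finset.sum_le_sum fun j _ => ?_
  split_ifs with h1 h2
  · omega
  · exact absurd (h1.trans h) h2
  · omega
  · omega

lemma cntEx_mono (p : Fin m → ℝ) (i : Fin m) {t s : ℝ} (h : t ≤ s) :
    cntEx p i t ≤ cntEx p i s := by
  classical
  refine Finset.sum_le_sum fun j _ => ?_
  split_ifs with h1 h2
  · omega
  · exact absurd (h1.trans h) h2
  · omega
  · omega

lemma cntEx_le_cnt (p : Fin m → ℝ) (i : Fin m) (t : ℝ) : cntEx p i t ≤ cnt p t := by
  classical
  exact Finset.sum_le_sum_of_subset (Finset.erase_subset _ _)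

lemma cnt_split (p : Fin m → ℝ) (i : Fin m) (t : ℝ) :
    cnt p t = cntEx p i t + (if p i ≤ t then 1 else 0) := by
  classical
  rw [cnt, cntEx, add_comm, ← Finset.add_sum_erase _ _ (Finset.mem_univ i)]

lemma cnt_of_le (p : Fin m → ℝ) (i : Fin m) {t : ℝ} (h : p i ≤ t) :
    cnt p t = cntEx p i t + 1 := by
  rw [cnt_split p i t, if_pos h]

lemma cnt_of_gt (p : Fin m → ℝ) (i : Fin m) {t : ℝ} (h : t < p i) :
    cnt p t = cntEx p i t := by
  rw [cnt_split p i t, if_neg (not_le.2 h), add_zero]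

lemma cntEx_le (p : Fin m → ℝ) (i : Fin m) (t : ℝ) : cntEx p i t ≤ m - 1 := by
  classical
  calc cntEx p i t ≤ ∑ _j ∈ Finset.univ.erase i, 1 := by
        refine Finset.sum_le_sum fun j _ => ?_
        split <;> omega
    _ = m - 1 := by
        rw [Finset.sum_const, smul_eq_mul, mul_one,
          Finset.card_erase_of_mem (Finset.mem_univ i), Finset.card_univ, Fintype.card_fin]

lemma cntEx_update (x : Fin m → ℝ) (i : Fin m) (u : ℝ) (t : ℝ) :
    cntEx (Function.update x i u) i t = cntEx x i t := by
  classical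
  refine Finset.sum_congr rfl fun j hj => ?_
  rw [Function.update_of_ne (Finset.ne_of_mem_erase hj)]

/-- the key bridge: order statistics vs counting -/
lemma orderStat_le_iff (p : Fin m → ℝ) (k : Fin m) (t : ℝ) :
    orderStat p k ≤ t ↔ (k : ℕ) + 1 ≤ cnt p t := by
  classical
  have hmono : Monotone (orderStat p) := Tuple.monotone_sort p
  have hcard : cnt p t = (Finset.univ.filter fun j : Fin m => orderStat p j ≤ t).card := by
    rw [cnt_eq_card]
    refine Finset.card_equiv (Tuple.sort p).symm fun j => ?_
    rw [Finset.mem_filter, Finset.mem_filter]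
    simp [orderStat]
  constructor
  · intro h
    rw [hcard]
    have hsub : Finset.Iic k ⊆ Finset.univ.filter fun j : Fin m => orderStat p j ≤ t := by
      intro j hj
      exact Finset.mem_filter.2 ⟨Finset.mem_univ _, (hmono (Finset.mem_Iic.1 hj)).trans h⟩
    calc (k : ℕ) + 1 = (Finset.Iic k).card := (Fin.card_Iic k).symm
      _ ≤ _ := Finset.card_le_card hsub
  · intro h
    rw [hcard] at h
    have : ∃ j ∈ Finset.univ.filter fun j : Fin m => orderStat p j ≤ t, k ≤ j := by
      by_contra hc
      push_neg at hc
      have hsub : (Finset.univ.filter fun j : Fin m => orderStat p j ≤ t) ⊆ Finset.Iio k := by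
        intro j hj
        exact Finset.mem_Iio.2 (hc j hj)
      have := Finset.card_le_card hsub
      rw [Fin.card_Iio] at this
      omega
    obtain ⟨j, hj, hkj⟩ := this
    exact (hmono hkj).trans (Finset.mem_filter.1 hj).2

variable (α : ℕ → ℝ)

lemma mem_rejSet_iff (p : Fin m → ℝ) {i : ℕ} (him : i ≤ m) :
    (∀ j : Fin m, (j : ℕ) < i → orderStat p j ≤ α ((j : ℕ) + 1)) ↔
      ∀ k : ℕ, 1 ≤ k → k ≤ i → k ≤ cnt p (α k) := by
  constructor
  · intro h k hk1 hki
    have hkm : k - 1 < m := by omega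
    have h2 : ((⟨k - 1, hkm⟩ : Fin m) : ℕ) < i := by simpa using by omega
    have h3 := (orderStat_le_iff p ⟨k - 1, hkm⟩ (α (k - 1 + 1))).1 (h ⟨k - 1, hkm⟩ h2)
    simpa [Nat.sub_add_cancel hk1] using h3
  · intro h j hj
    exact (orderStat_le_iff p j (α ((j : ℕ) + 1))).2 (h ((j : ℕ) + 1) (by omega) (by omega))

/-- downward-closed characterization of a natural sSup -/
lemma nat_sSup_eq_iff {S : Set ℕ} (bdd : BddAbove S) (h0 : S.Nonempty)
    (dc : ∀ {a b : ℕ}, a ≤ b → b ∈ S → a ∈ S) {n : ℕ} :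
    sSup S = n ↔ n ∈ S ∧ n + 1 ∉ S := by
  constructor
  · rintro rfl
    refine ⟨Nat.sSup_mem h0 bdd, fun h => ?_⟩
    exact absurd (le_csSup bdd h) (by omega)
  · rintro ⟨h1, h2⟩
    refine le_antisymm ?_ (le_csSup bdd h1)
    by_contra hc
    push_neg at hc
    exact h2 (dc (by omega) (Nat.sSup_mem h0 bdd))

section R

lemma rejSet_bdd (p : Fin m → ℝ) : BddAbove (rejSet α p) :=
  ⟨m, fun _ hx => hx.1⟩

lemma rejSet_zero (p : Fin m → ℝ) : 0 ∈ rejSet α p :=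
  mem_rejSet.2 ⟨Nat.zero_le m, fun j hj => absurd hj (by omega)⟩

lemma rejSet_dc (p : Fin m → ℝ) : ∀ {a b : ℕ}, a ≤ b → b ∈ rejSet α p → a ∈ rejSet α p := by
  intro a b hab hb
  exact mem_rejSet.2 ⟨hab.trans hb.1, fun j hj => hb.2 j (by omega)⟩

lemma R_mem (p : Fin m → ℝ) : rejCount m α p ∈ rejSet α p := by
  rw [rejCount_eq]
  exact Nat.sSup_mem ⟨0, rejSet_zero α p⟩ (rejSet_bdd α p)

lemma R_le (p : Fin m → ℝ) : rejCount m α p ≤ m := (R_mem α p).1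

lemma R_cnt (p : Fin m → ℝ) {k : ℕ} (hk1 : 1 ≤ k) (hk : k ≤ rejCount m α p) :
    k ≤ cnt p (α k) :=
  (mem_rejSet_iff α p (R_le α p)).1 (R_mem α p).2 k hk1 hk

lemma le_R (p : Fin m → ℝ) {i : ℕ} (him : i ≤ m)
    (h : ∀ k : ℕ, 1 ≤ k → k ≤ i → k ≤ cnt p (α k)) : i ≤ rejCount m α p := by
  rw [rejCount_eq]
  exact le_csSup (rejSet_bdd α p) (mem_rejSet.2 ⟨him, (mem_rejSet_iff α p him).2 h⟩)

lemma R_eq_iff (p : Fin m → ℝ) {n : ℕ} :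
    rejCount m α p = n ↔ n ∈ rejSet α p ∧ n + 1 ∉ rejSet α p := by
  rw [rejCount_eq]
  exact nat_sSup_eq_iff (rejSet_bdd α p) ⟨0, rejSet_zero α p⟩ (rejSet_dc α p)

end R

section K

lemma KSet_bdd (p : Fin m → ℝ) (i : Fin m) : BddAbove (KSet α p i) :=
  ⟨m, fun _ hx => hx.1⟩

lemma KSet_zero (p : Fin m → ℝ) (i : Fin m) : 0 ∈ KSet α p i :=
  mem_KSet.2 ⟨Nat.zero_le m, fun j hj1 hj => by omega⟩

lemma KSet_dc (p : Fin m → ℝ) (i : Fin m) :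
    ∀ {a b : ℕ}, a ≤ b → b ∈ KSet α p i → a ∈ KSet α p i := by
  intro a b hab hb
  exact mem_KSet.2 ⟨hab.trans hb.1, fun j hj1 hj => hb.2 j hj1 (by omega)⟩

lemma KK_mem (p : Fin m → ℝ) (i : Fin m) : KK α p i ∈ KSet α p i :=
  Nat.sSup_mem ⟨0, KSet_zero α p i⟩ (KSet_bdd α p i)

lemma KK_le (p : Fin m → ℝ) (i : Fin m) : KK α p i ≤ m := (KK_mem α p i).1

lemma KK_cnt (p : Fin m → ℝ) (i : Fin m) {j : ℕ} (hj1 : 1 ≤ j) (hj : j < KK α p i) :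
    j ≤ cntEx p i (α j) := (KK_mem α p i).2 j hj1 hj

lemma one_le_KK (hm : 1 ≤ m) (p : Fin m → ℝ) (i : Fin m) : 1 ≤ KK α p i :=
  le_csSup (KSet_bdd α p i) (mem_KSet.2 ⟨hm, fun j hj1 hj => by omega⟩)

lemma KK_eq_iff (p : Fin m → ℝ) (i : Fin m) {n : ℕ} :
    KK α p i = n ↔ n ∈ KSet α p i ∧ n + 1 ∉ KSet α p i :=
  nat_sSup_eq_iff (KSet_bdd α p i) ⟨0, KSet_zero α p i⟩ (KSet_dc α p i)

lemma KK_break (hm : 1 ≤ m) (p : Fin m → ℝ) (i : Fin m) :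
    cntEx p i (α (KK α p i)) ≤ KK α p i - 1 := by
  rcases eq_or_lt_of_le (KK_le α p i) with heq | hlt
  · have h1 := one_le_KK α hm p i
    have h2 := cntEx_le p i (α (KK α p i))
    omega
  · by_contra hc
    push_neg at hc
    have h1 := one_le_KK α hm p i
    have hmem : KK α p i + 1 ∈ KSet α p i := by
      refine mem_KSet.2 ⟨by omega, fun j hj1 hj => ?_⟩
      rcases Nat.lt_or_ge j (KK α p i) with h | h
      · exact KK_cnt α p i hj1 h
      · have hje : j = KK α p i := by omega
        rw [hje]
        omega
    have h3 : KK α p i + 1 ≤ KK α p i := le_csSup (KSet_bdd α p i) hmem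
    omega

lemma KK_update (x : Fin m → ℝ) (i : Fin m) (u : ℝ) :
    KK α (Function.update x i u) i = KK α x i := by
  unfold KK KSet
  congr 1
  ext k
  simp only [Set.mem_setOf_eq, cntEx_update]

end K

section Main

variable (hm : 1 ≤ m) (hαmono : ∀ a b : ℕ, 1 ≤ a → a ≤ b → b ≤ m → α a ≤ α b)
include hm hαmono

/-- Key deterministic Lemma 1: if H_i is rejected then p_i ≤ α_K and K ≤ R. -/
lemma lemma1 (p : Fin m → ℝ) (i : Fin m) (hR1 : 1 ≤ rejCount m α p)
    (hpi : p i ≤ α (rejCount m α p)) :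
    p i ≤ α (KK α p i) ∧ KK α p i ≤ rejCount m α p := by
  have hKm : KK α p i ≤ m := KK_le α p i
  have hK1 : 1 ≤ KK α p i := one_le_KK α hm p i
  have hRm : rejCount m α p ≤ m := R_le α p
  have hb : p i ≤ α (KK α p i) := by
    rcases le_or_gt (rejCount m α p) (KK α p i) with h | h
    · exact hpi.trans (hαmono _ _ hR1 h hKm)
    · have hcnt : KK α p i ≤ cnt p (α (KK α p i)) := R_cnt α p hK1 h.le
      by_contra hgt
      push_neg at hgt
      have h1 := cnt_of_gt p i hgt
      have h2 := KK_break α hm p i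
      omega
  refine ⟨hb, ?_⟩
  refine le_R α p hKm fun k hk1 hkK => ?_
  rcases eq_or_lt_of_le hkK with heq | hlt
  · rw [heq]
    have h1 : cnt p (α (KK α p i)) = cntEx p i (α (KK α p i)) + 1 := cnt_of_le p i hb
    rcases Nat.eq_or_lt_of_le hK1 with h2 | h2
    · omega
    · have h3 : KK α p i - 1 ≤ cntEx p i (α (KK α p i - 1)) :=
        KK_cnt α p i (by omega) (by omega)
      have h4 : cntEx p i (α (KK α p i - 1)) ≤ cntEx p i (α (KK α p i)) :=
        cntEx_mono p i (hαmono _ _ (by omega) (by omega) hKm)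
      omega
  · have h3 : k ≤ cntEx p i (α k) := KK_cnt α p i hk1 hlt
    exact h3.trans (cntEx_le_cnt p i (α k))

/-- Key deterministic Lemma M: the sum of the leave-one-out terms is at most 1. -/
lemma lemmaM (I₀ : Finset (Fin m)) (p : Fin m → ℝ) :
    ∑ i ∈ I₀, (if α (KK α p i) < p i then ((m + 1 - KK α p i : ℕ) : ℝ≥0∞)⁻¹ else 0) ≤ 1 := by
  classical
  have hsum : ∑ i ∈ I₀, (if α (KK α p i) < p i then ((m + 1 - KK α p i : ℕ) : ℝ≥0∞)⁻¹ else 0)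
      = ∑ i ∈ I₀.filter (fun i => α (KK α p i) < p i), ((m + 1 - KK α p i : ℕ) : ℝ≥0∞)⁻¹ :=
    (Finset.sum_filter _ _).symm
  rw [hsum]
  rcases (I₀.filter (fun i => α (KK α p i) < p i)).eq_empty_or_nonempty with hCe | ⟨i₀, hi₀⟩
  · rw [hCe]
    simp
  · have hgt : ∀ i ∈ I₀.filter (fun i => α (KK α p i) < p i), α (KK α p i) < p i :=
      fun i hi => (Finset.mem_filter.1 hi).2
    have hA : ∀ i ∈ I₀.filter (fun i => α (KK α p i) < p i),
        cnt p (α (KK α p i)) < KK α p i := by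
      intro i hi
      have h1 := cnt_of_gt p i (hgt i hi)
      have h2 := KK_break α hm p i
      have h3 := one_le_KK α hm p i
      omega
    have hB : ∀ i ∈ I₀.filter (fun i => α (KK α p i) < p i),
        ∀ j : ℕ, 1 ≤ j → j < KK α p i → j ≤ cnt p (α j) := by
      intro i _ j hj1 hj
      exact (KK_cnt α p i hj1 hj).trans (cntEx_le_cnt p i (α j))
    have hKeq : ∀ i ∈ I₀.filter (fun i => α (KK α p i) < p i), KK α p i = KK α p i₀ := by
      intro i hi
      rcases lt_trichotomy (KK α p i) (KK α p i₀) with h | h | h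
      · exact absurd (hB i₀ hi₀ _ (one_le_KK α hm p i) h) (by have := hA i hi; omega)
      · exact h
      · exact absurd (hB i hi _ (one_le_KK α hm p i₀) h) (by have := hA i₀ hi₀; omega)
    have hK1 : 1 ≤ KK α p i₀ := one_le_KK α hm p i₀
    have hKm : KK α p i₀ ≤ m := KK_le α p i₀
    have hcard : (I₀.filter (fun i => α (KK α p i) < p i)).card ≤ m + 1 - KK α p i₀ := by
      have hsub : I₀.filter (fun i => α (KK α p i) < p i)
          ⊆ Finset.univ.filter (fun j => α (KK α p i₀) < p j) := by
        intro i hi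
        refine Finset.mem_filter.2 ⟨Finset.mem_univ _, ?_⟩
        have h5 := hgt i hi
        rwa [hKeq i hi] at h5
      have h1 := Finset.card_le_card hsub
      have h2 : (Finset.univ.filter (fun j : Fin m => p j ≤ α (KK α p i₀))).card
          + (Finset.univ.filter (fun j : Fin m => ¬ p j ≤ α (KK α p i₀))).card = m := by
        rw [Finset.card_filter_add_card_filter_not, Finset.card_univ, Fintype.card_fin]
      have h3 : (Finset.univ.filter (fun j : Fin m => α (KK α p i₀) < p j))
          = (Finset.univ.filter (fun j : Fin m => ¬ p j ≤ α (KK α p i₀))) := by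
        refine Finset.filter_congr fun j _ => ?_
        simp [not_le]
      have h4 : KK α p i₀ - 1 ≤ cnt p (α (KK α p i₀)) := by
        rcases Nat.eq_or_lt_of_le hK1 with h | h
        · omega
        · have h5 : KK α p i₀ - 1 ≤ cnt p (α (KK α p i₀ - 1)) :=
            hB i₀ hi₀ (KK α p i₀ - 1) (by omega) (by omega)
          have h6 : cnt p (α (KK α p i₀ - 1)) ≤ cnt p (α (KK α p i₀)) :=
            cnt_mono p (hαmono _ _ (by omega) (by omega) hKm)
          omega
      rw [h3] at h1
      rw [cnt_eq_card] at h4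
      omega
    calc ∑ i ∈ I₀.filter (fun i => α (KK α p i) < p i), ((m + 1 - KK α p i : ℕ) : ℝ≥0∞)⁻¹
        = ∑ _i ∈ I₀.filter (fun i => α (KK α p i) < p i), ((m + 1 - KK α p i₀ : ℕ) : ℝ≥0∞)⁻¹ :=
          Finset.sum_congr rfl fun i hi => by rw [hKeq i hi]
      _ = ((I₀.filter (fun i => α (KK α p i) < p i)).card : ℝ≥0∞)
            * ((m + 1 - KK α p i₀ : ℕ) : ℝ≥0∞)⁻¹ := by
          rw [Finset.sum_const, nsmul_eq_mul]
      _ ≤ ((m + 1 - KK α p i₀ : ℕ) : ℝ≥0∞) * ((m + 1 - KK α p i₀ : ℕ) : ℝ≥0∞)⁻¹ := by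
          exact mul_le_mul_left (by exact_mod_cast hcard) _
      _ ≤ 1 := ENNReal.mul_inv_le_one _

end Main

section Measurability

lemma measurable_cnt (t : ℝ) : Measurable fun p : Fin m → ℝ => cnt p t := by
  classical
  apply Finset.measurable_sum
  intro j _
  exact Measurable.ite (measurableSet_le (measurable_pi_apply j) measurable_const)
    measurable_const measurable_const

lemma measurable_cntEx (i : Fin m) (t : ℝ) : Measurable fun p : Fin m → ℝ => cntEx p i t := by
  classical
  apply Finset.measurable_sum
  intro j _
  exact Measurable.ite (measurableSet_le (measurable_pi_apply j) measurable_const)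
    measurable_const measurable_const

lemma measurableSet_cond (α : ℕ → ℝ) (n : ℕ) :
    MeasurableSet {p : Fin m → ℝ | ∀ k : ℕ, 1 ≤ k → k ≤ n → k ≤ cnt p (α k)} := by
  have heq : {p : Fin m → ℝ | ∀ k : ℕ, 1 ≤ k → k ≤ n → k ≤ cnt p (α k)}
      = ⋂ k ∈ Finset.Icc 1 n, {p : Fin m → ℝ | k ≤ cnt p (α k)} := by
    ext p
    simp only [Set.mem_setOf_eq, Set.mem_iInter, Finset.mem_Icc]
    exact ⟨fun h k hk => h k hk.1 hk.2, fun h k hk1 hk2 => h k ⟨hk1, hk2⟩⟩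
  rw [heq]
  exact Set.Finite.measurableSet_biInter (Finset.finite_toSet _)
    fun k _ => measurable_cnt (α k) measurableSet_Ici

lemma measurableSet_memRej (α : ℕ → ℝ) (k : ℕ) :
    MeasurableSet {p : Fin m → ℝ | k ∈ rejSet α p} := by
  rcases le_or_gt k m with h | h
  · have heq : {p : Fin m → ℝ | k ∈ rejSet α p}
        = {p : Fin m → ℝ | ∀ j : ℕ, 1 ≤ j → j ≤ k → j ≤ cnt p (α j)} := by
      ext p
      simp only [Set.mem_setOf_eq, mem_rejSet]
      constructor
      · intro hp
        exact (mem_rejSet_iff α p h).1 hp.2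
      · intro hp
        exact ⟨h, (mem_rejSet_iff α p h).2 hp⟩
    rw [heq]
    exact measurableSet_cond α k
  · have heq : {p : Fin m → ℝ | k ∈ rejSet α p} = ∅ := by
      ext p
      simp only [Set.mem_setOf_eq, mem_rejSet, Set.mem_empty_iff_false, iff_false]
      intro hp
      omega
    rw [heq]
    exact MeasurableSet.empty

lemma measurableSet_R_eq (α : ℕ → ℝ) (n : ℕ) :
    MeasurableSet {p : Fin m → ℝ | rejCount m α p = n} := by
  have heq : {p : Fin m → ℝ | rejCount m α p = n}
      = {p : Fin m → ℝ | n ∈ rejSet α p} ∩ {p : Fin m → ℝ | (n + 1) ∈ rejSet α p}ᶜ := by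
    ext p
    simp only [Set.mem_setOf_eq, Set.mem_inter_iff, Set.mem_compl_iff, R_eq_iff α p]
  rw [heq]
  exact (measurableSet_memRej α n).inter (measurableSet_memRej α (n + 1)).compl

lemma measurableSet_memKSet (α : ℕ → ℝ) (i : Fin m) (k : ℕ) :
    MeasurableSet {p : Fin m → ℝ | k ∈ KSet α p i} := by
  rcases le_or_gt k m with h | h
  · have heq : {p : Fin m → ℝ | k ∈ KSet α p i}
        = ⋂ j ∈ Finset.Ico 1 k, {p : Fin m → ℝ | j ≤ cntEx p i (α j)} := by
      ext p
      simp only [Set.mem_setOf_eq, mem_KSet, Set.mem_iInter, Finset.mem_Ico]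
      constructor
      · intro hp j hj
        exact hp.2 j hj.1 hj.2
      · intro hp
        exact ⟨h, fun j hj1 hj2 => hp j ⟨hj1, hj2⟩⟩
    rw [heq]
    exact Set.Finite.measurableSet_biInter (Finset.finite_toSet _)
      fun j _ => measurable_cntEx i (α j) measurableSet_Ici
  · have heq : {p : Fin m → ℝ | k ∈ KSet α p i} = ∅ := by
      ext p
      simp only [Set.mem_setOf_eq, mem_KSet, Set.mem_empty_iff_false, iff_false]
      intro hp
      omega
    rw [heq]
    exact MeasurableSet.empty

lemma measurableSet_KK_eq (α : ℕ → ℝ) (i : Fin m) (n : ℕ) :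
    MeasurableSet {p : Fin m → ℝ | KK α p i = n} := by
  have heq : {p : Fin m → ℝ | KK α p i = n}
      = {p : Fin m → ℝ | n ∈ KSet α p i} ∩ {p : Fin m → ℝ | (n + 1) ∈ KSet α p i}ᶜ := by
    ext p
    simp only [Set.mem_setOf_eq, Set.mem_inter_iff, Set.mem_compl_iff, KK_eq_iff α p i]
  rw [heq]
  exact (measurableSet_memKSet α i n).inter (measurableSet_memKSet α i (n + 1)).compl

/-- compose a measurable ℕ-valued statistic with a family of measurable functions -/
lemma measurable_bind {β : Type*} [MeasurableSpace β] [AddCommMonoid β] [MeasurableAdd₂ β]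
    (N : (Fin m → ℝ) → ℕ) (hN : ∀ r : ℕ, MeasurableSet {p : Fin m → ℝ | N p = r})
    (hNle : ∀ p, N p ≤ m) (F : ℕ → (Fin m → ℝ) → β) (hF : ∀ r, Measurable (F r)) :
    Measurable fun p => F (N p) p := by
  classical
  have heq : (fun p => F (N p) p)
      = fun p => ∑ r ∈ Finset.range (m + 1), Set.indicator {p : Fin m → ℝ | N p = r} (F r) p := by
    funext p
    rw [Finset.sum_eq_single (N p)]
    · rw [Set.indicator_of_mem]
      exact rfl
    · intro r _ hne
      exact Set.indicator_of_notMem (fun hmem => hne (Set.mem_setOf_eq ▸ hmem).symm) _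
    · intro hnotin
      exact absurd (Finset.mem_range.2 (by have := hNle p; omega)) hnotin
  rw [heq]
  exact Finset.measurable_sum _ fun r _ => ((hF r).indicator (hN r))

end Measurability

section Integration

variable {m' : ℕ}

/-- the per-hypothesis FDR contribution -/
noncomputable def fF (α : ℕ → ℝ) (i : Fin m) (p : Fin m → ℝ) : ℝ≥0∞ :=
  if 0 < rejCount m α p ∧ p i ≤ α (rejCount m α p) then ((rejCount m α p : ℕ) : ℝ≥0∞)⁻¹ else 0

/-- the leave-one-out majorant -/
noncomputable def hH (α : ℕ → ℝ) (i : Fin m) (p : Fin m → ℝ) : ℝ≥0∞ :=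
  if α (KK α p i) < p i then ((m + 1 - KK α p i : ℕ) : ℝ≥0∞)⁻¹ else 0

lemma measurable_fF (α : ℕ → ℝ) (i : Fin m) : Measurable (fF α i) := by
  classical
  have h := measurable_bind (m := m) (rejCount m α) (measurableSet_R_eq α) (R_le α)
    (fun r p => if 0 < r ∧ p i ≤ α r then ((r : ℕ) : ℝ≥0∞)⁻¹ else 0)
    (fun r => by
      refine Measurable.ite ?_ measurable_const measurable_const
      have hset : {p : Fin m → ℝ | 0 < r ∧ p i ≤ α r}
          = {p : Fin m → ℝ | 0 < r} ∩ {p : Fin m → ℝ | p i ≤ α r} := Set.setOf_and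
      rw [hset]
      exact (MeasurableSet.const _).inter
        (measurableSet_le (measurable_pi_apply i) measurable_const))
  exact h

lemma measurable_hH (α : ℕ → ℝ) (i : Fin m) : Measurable (hH α i) := by
  classical
  have h := measurable_bind (m := m) (fun p => KK α p i) (measurableSet_KK_eq α i)
    (fun p => KK_le α p i)
    (fun n p => if α n < p i then ((m + 1 - n : ℕ) : ℝ≥0∞)⁻¹ else 0)
    (fun n => Measurable.ite (measurableSet_lt measurable_const (measurable_pi_apply i))
      measurable_const measurable_const)
  exact h

lemma ofReal_g_eq (α : ℕ → ℝ) (I₀ : Finset (Fin m)) (p : Fin m → ℝ) :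
    ENNReal.ofReal (if 0 < rejCount m α p then
        ((falseRejCount m α I₀ p : ℝ) / (rejCount m α p : ℝ)) else 0)
      = ∑ i ∈ I₀, fF α i p := by
  classical
  by_cases hR : 0 < rejCount m α p
  · rw [if_pos hR]
    have hRpos : (0 : ℝ) < (rejCount m α p : ℝ) := by exact_mod_cast hR
    rw [ENNReal.ofReal_div_of_pos hRpos, ENNReal.ofReal_natCast, ENNReal.ofReal_natCast]
    unfold falseRejCount
    rw [Finset.card_filter, Nat.cast_sum, div_eq_mul_inv, Finset.sum_mul]
    refine Finset.sum_congr rfl fun i _ => ?_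
    unfold fF
    by_cases hc : p i ≤ α (rejCount m α p)
    · rw [if_pos hc, if_pos ⟨hR, hc⟩, Nat.cast_one, one_mul]
    · rw [if_neg hc, if_neg (fun h => hc h.2), Nat.cast_zero, zero_mul]
  · rw [if_neg hR, ENNReal.ofReal_zero]
    symm
    refine Finset.sum_eq_zero fun i _ => ?_
    unfold fF
    rw [if_neg (fun h => hR h.1)]

/-- the inner (coordinate-`i`) integral bound: the heart of the argument. -/
lemma inner_bound (α : ℕ → ℝ) (hm : 1 ≤ m)
    (hαmono : ∀ a b : ℕ, 1 ≤ a → a ≤ b → b ≤ m → α a ≤ α b)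
    (hαrange : ∀ i : ℕ, 1 ≤ i → i ≤ m → 0 ≤ α i ∧ α i < 1)
    {q : ℝ} (hq0 : 0 < q)
    (hαcond : ∀ i : ℕ, 1 ≤ i → i ≤ m →
      α i / (1 - α i) ≤ (i : ℝ) * q / ((m : ℝ) + 1 - (i : ℝ)))
    (i : Fin m) (x : Fin m → ℝ) :
    ∫⁻ u, fF α i (Function.update x i u) ∂(volume.restrict (Set.Icc (0 : ℝ) 1))
      ≤ ENNReal.ofReal q *
        ∫⁻ u, hH α i (Function.update x i u) ∂(volume.restrict (Set.Icc (0 : ℝ) 1)) := by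
  classical
  have hK1 : 1 ≤ KK α x i := one_le_KK α hm x i
  have hKm : KK α x i ≤ m := KK_le α x i
  obtain ⟨ht0, ht1⟩ := hαrange (KK α x i) hK1 hKm
  have hcond := hαcond (KK α x i) hK1 hKm
  -- pointwise bound for the integrand
  have hpt : ∀ u : ℝ, fF α i (Function.update x i u)
      ≤ Set.indicator (Set.Iic (α (KK α x i))) (fun _ => ((KK α x i : ℕ) : ℝ≥0∞)⁻¹) u := by
    intro u
    unfold fF
    split_ifs with hcond2
    · obtain ⟨h1, h2⟩ := lemma1 α hm hαmono (Function.update x i u) i hcond2.1 hcond2.2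
      rw [KK_update] at h1 h2
      rw [Function.update_self] at h1
      rw [Set.indicator_of_mem (Set.mem_Iic.2 h1)]
      exact ENNReal.inv_le_inv.2 (by exact_mod_cast h2)
    · exact zero_le
  have hind : ∫⁻ u, Set.indicator (Set.Iic (α (KK α x i)))
        (fun _ => ((KK α x i : ℕ) : ℝ≥0∞)⁻¹) u ∂(volume.restrict (Set.Icc (0 : ℝ) 1))
      = ((KK α x i : ℕ) : ℝ≥0∞)⁻¹ * ENNReal.ofReal (α (KK α x i)) := by
    rw [lintegral_indicator_const measurableSet_Iic]
    congr 1
    rw [Measure.restrict_apply measurableSet_Iic]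
    have hIic : Set.Iic (α (KK α x i)) ∩ Set.Icc (0 : ℝ) 1 = Set.Icc 0 (α (KK α x i)) := by
      ext y
      simp only [Set.mem_inter_iff, Set.mem_Iic, Set.mem_Icc]
      constructor
      · rintro ⟨hy1, hy2, _hy3⟩
        exact ⟨hy2, hy1⟩
      · rintro ⟨hy1, hy2⟩
        exact ⟨hy2, hy1, hy2.trans ht1.le⟩
    rw [hIic, Real.volume_Icc, sub_zero]
  have hH_eq : ∀ u : ℝ, hH α i (Function.update x i u)
      = Set.indicator (Set.Ioi (α (KK α x i)))
          (fun _ => ((m + 1 - KK α x i : ℕ) : ℝ≥0∞)⁻¹) u := by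
    intro u
    unfold hH
    rw [KK_update, Function.update_self]
    by_cases hc : α (KK α x i) < u
    · rw [if_pos hc, Set.indicator_of_mem (Set.mem_Ioi.2 hc)]
    · rw [if_neg hc, Set.indicator_of_notMem (fun h => hc (Set.mem_Ioi.1 h))]
  have hind2 : ∫⁻ u, hH α i (Function.update x i u) ∂(volume.restrict (Set.Icc (0 : ℝ) 1))
      = ((m + 1 - KK α x i : ℕ) : ℝ≥0∞)⁻¹ * ENNReal.ofReal (1 - α (KK α x i)) := by
    rw [lintegral_congr hH_eq, lintegral_indicator_const measurableSet_Ioi]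
    congr 1
    rw [Measure.restrict_apply measurableSet_Ioi]
    have hIoi : Set.Ioi (α (KK α x i)) ∩ Set.Icc (0 : ℝ) 1 = Set.Ioc (α (KK α x i)) 1 := by
      ext y
      simp only [Set.mem_inter_iff, Set.mem_Ioi, Set.mem_Icc, Set.mem_Ioc]
      constructor
      · rintro ⟨hy1, _hy2, hy3⟩
        exact ⟨hy1, hy3⟩
      · rintro ⟨hy1, hy2⟩
        exact ⟨hy1, ht0.trans hy1.le, hy2⟩
    rw [hIoi, Real.volume_Ioc]
  -- the key numeric inequality
  have hcastD : ((m + 1 - KK α x i : ℕ) : ℝ) = (m : ℝ) + 1 - (KK α x i : ℝ) := by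
    rw [Nat.cast_sub (by omega)]
    push_cast
    ring
  have hreal : α (KK α x i) * ((m + 1 - KK α x i : ℕ) : ℝ)
      ≤ (q * (1 - α (KK α x i))) * (KK α x i : ℝ) := by
    have hD : (0 : ℝ) < (m : ℝ) + 1 - (KK α x i : ℝ) := by
      have : (KK α x i : ℝ) ≤ (m : ℝ) := by exact_mod_cast hKm
      linarith
    have h1t : (0 : ℝ) < 1 - α (KK α x i) := by linarith
    rw [div_le_div_iff₀ h1t hD] at hcond
    rw [hcastD]
    nlinarith [hcond]
  have hK0 : ((KK α x i : ℕ) : ℝ≥0∞) ≠ 0 := Nat.cast_ne_zero.2 (by omega)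
  have hKt : ((KK α x i : ℕ) : ℝ≥0∞) ≠ ⊤ := ENNReal.natCast_ne_top _
  have hD0 : ((m + 1 - KK α x i : ℕ) : ℝ≥0∞) ≠ 0 := Nat.cast_ne_zero.2 (by omega)
  have hDt : ((m + 1 - KK α x i : ℕ) : ℝ≥0∞) ≠ ⊤ := ENNReal.natCast_ne_top _
  have step1 : ENNReal.ofReal (α (KK α x i)) * ((m + 1 - KK α x i : ℕ) : ℝ≥0∞)
      ≤ ENNReal.ofReal (q * (1 - α (KK α x i))) * ((KK α x i : ℕ) : ℝ≥0∞) := by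
    rw [← ENNReal.ofReal_natCast (m + 1 - KK α x i), ← ENNReal.ofReal_natCast (KK α x i),
      ← ENNReal.ofReal_mul ht0, ← ENNReal.ofReal_mul (by nlinarith)]
    exact ENNReal.ofReal_le_ofReal hreal
  have step2 : ENNReal.ofReal (α (KK α x i)) / ((KK α x i : ℕ) : ℝ≥0∞)
      ≤ ENNReal.ofReal (q * (1 - α (KK α x i))) / ((m + 1 - KK α x i : ℕ) : ℝ≥0∞) := by
    rw [ENNReal.div_le_iff hK0 hKt, div_eq_mul_inv, mul_right_comm, ← div_eq_mul_inv,
      ENNReal.le_div_iff_mul_le (Or.inl hD0) (Or.inl hDt)]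
    exact step1
  have keynum : ((KK α x i : ℕ) : ℝ≥0∞)⁻¹ * ENNReal.ofReal (α (KK α x i))
      ≤ ENNReal.ofReal q *
        (((m + 1 - KK α x i : ℕ) : ℝ≥0∞)⁻¹ * ENNReal.ofReal (1 - α (KK α x i))) := by
    calc ((KK α x i : ℕ) : ℝ≥0∞)⁻¹ * ENNReal.ofReal (α (KK α x i))
        = ENNReal.ofReal (α (KK α x i)) / ((KK α x i : ℕ) : ℝ≥0∞) := by
          rw [div_eq_mul_inv, mul_comm]
      _ ≤ ENNReal.ofReal (q * (1 - α (KK α x i))) / ((m + 1 - KK α x i : ℕ) : ℝ≥0∞) := step2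
      _ = ENNReal.ofReal q *
            (((m + 1 - KK α x i : ℕ) : ℝ≥0∞)⁻¹ * ENNReal.ofReal (1 - α (KK α x i))) := by
          rw [ENNReal.ofReal_mul hq0.le, div_eq_mul_inv]
          ring
  calc ∫⁻ u, fF α i (Function.update x i u) ∂(volume.restrict (Set.Icc (0 : ℝ) 1))
      ≤ ∫⁻ u, Set.indicator (Set.Iic (α (KK α x i)))
          (fun _ => ((KK α x i : ℕ) : ℝ≥0∞)⁻¹) u ∂(volume.restrict (Set.Icc (0 : ℝ) 1)) :=
        lintegral_mono hpt
    _ = ((KK α x i : ℕ) : ℝ≥0∞)⁻¹ * ENNReal.ofReal (α (KK α x i)) := hind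
    _ ≤ ENNReal.ofReal q *
          (((m + 1 - KK α x i : ℕ) : ℝ≥0∞)⁻¹ * ENNReal.ofReal (1 - α (KK α x i))) := keynum
    _ = ENNReal.ofReal q *
          ∫⁻ u, hH α i (Function.update x i u) ∂(volume.restrict (Set.Icc (0 : ℝ) 1)) := by
        rw [hind2]

end Integration

end SDP

/-- Theorem 1.1: for independent p-values, uniform on [0,1] under the true nulls,
the step-down procedure with critical values α_1 ≤ … ≤ α_m ∈ [0,1) satisfying
α_i/(1-α_i) ≤ iq/(m+1-i) controls the FDR at level q. -/
theorem stmt_11 {Ω : Type*} [MeasurableSpace Ω] (μ : Measure Ω) [IsProbabilityMeasure μ]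
    (m : ℕ) (hm : 1 ≤ m) (q : ℝ) (hq0 : 0 < q) (hq1 : q < 1)
    (P : Fin m → Ω → ℝ) (hmeas : ∀ i, Measurable (P i))
    (hrange : ∀ i ω, P i ω ∈ Set.Icc (0 : ℝ) 1)
    (hindep : iIndepFun P μ)
    (I₀ : Finset (Fin m))
    (hunif : ∀ i ∈ I₀, μ.map (P i) = volume.restrict (Set.Icc (0 : ℝ) 1))
    (α : ℕ → ℝ)
    (hαrange : ∀ i : ℕ, 1 ≤ i → i ≤ m → 0 ≤ α i ∧ α i < 1)
    (hαmono : ∀ a b : ℕ, 1 ≤ a → a ≤ b → b ≤ m → α a ≤ α b)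
    (hαcond : ∀ i : ℕ, 1 ≤ i → i ≤ m →
      α i / (1 - α i) ≤ (i : ℝ) * q / ((m : ℝ) + 1 - (i : ℝ))) :
    FDR μ m α I₀ P ≤ q := by
  classical
  set ν : Fin m → Measure ℝ := fun i => μ.map (P i) with hν
  haveI hprob : ∀ i, IsProbabilityMeasure (ν i) :=
    fun i => Measure.isProbabilityMeasure_map (hmeas i).aemeasurable
  have hTmeas : Measurable (fun ω (i : Fin m) => P i ω) := measurable_pi_lambda _ hmeas
  have hmap : μ.map (fun ω (i : Fin m) => P i ω) = Measure.pi ν := by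
    refine (Measure.pi_eq fun s hs => ?_).symm
    rw [Measure.map_apply hTmeas (MeasurableSet.univ_pi hs)]
    have hpre : (fun ω (i : Fin m) => P i ω) ⁻¹' Set.pi Set.univ s = ⋂ i, P i ⁻¹' s i := by
      ext ω
      simp [Set.mem_pi]
    rw [hpre]
    have h2 := hindep.measure_inter_preimage_eq_mul (S := Finset.univ) (sets := s)
      (fun i _ => hs i)
    have h3 : (⋂ i ∈ Finset.univ, P i ⁻¹' s i) = ⋂ i, P i ⁻¹' s i := by
      ext ω
      simp
    rw [h3] at h2
    rw [h2]
    exact Finset.prod_congr rfl fun i _ => (Measure.map_apply (hmeas i) (hs i)).symm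
  set g : (Fin m → ℝ) → ℝ := fun p => if 0 < rejCount m α p then
      ((falseRejCount m α I₀ p : ℝ) / (rejCount m α p : ℝ)) else 0 with hgdef
  have hgnn : ∀ p : Fin m → ℝ, 0 ≤ g p := by
    intro p
    rw [hgdef]
    dsimp only
    split_ifs
    · positivity
    · exact le_refl 0
  have hgmeas : Measurable g := by
    rw [hgdef]
    exact SDP.measurable_bind (rejCount m α) (SDP.measurableSet_R_eq α) (SDP.R_le α)
      (fun r p => if 0 < r then ((I₀.filter fun j => p j ≤ α r).card : ℝ) / (r : ℝ) else 0)
      (fun r => by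
        by_cases hr : 0 < r
        · simp only [if_pos hr]
          have hsum : (fun p : Fin m → ℝ =>
                (((I₀.filter fun j => p j ≤ α r).card : ℝ)) / (r : ℝ))
              = fun p => (∑ j ∈ I₀, if p j ≤ α r then (1 : ℝ) else 0) / (r : ℝ) := by
            funext p
            rw [Finset.card_filter, Nat.cast_sum]
            congr 1
            refine Finset.sum_congr rfl fun j _ => ?_
            split_ifs <;> simp
          rw [hsum]
          exact (Finset.measurable_sum _ fun j _ => Measurable.ite
            (measurableSet_le (measurable_pi_apply j) measurable_const)
            measurable_const measurable_const).div_const _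
        · simp only [if_neg hr]
          exact measurable_const)
  have hFDReq : FDR μ m α I₀ P = ∫ ω, g (fun i => P i ω) ∂μ := by
    rw [hgdef]
    rfl
  have h1 : FDR μ m α I₀ P
      = (∫⁻ ω, ENNReal.ofReal (g (fun i => P i ω)) ∂μ).toReal := by
    rw [hFDReq]
    exact integral_eq_lintegral_of_nonneg_ae
      (Filter.Eventually.of_forall fun ω => hgnn _)
      ((hgmeas.comp hTmeas).aestronglyMeasurable)
  have h2 : ∫⁻ ω, ENNReal.ofReal (g (fun i => P i ω)) ∂μ
      = ∫⁻ p, ∑ i ∈ I₀, SDP.fF α i p ∂(Measure.pi ν) := by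
    calc ∫⁻ ω, ENNReal.ofReal (g (fun i => P i ω)) ∂μ
        = ∫⁻ p, ENNReal.ofReal (g p) ∂(μ.map (fun ω (i : Fin m) => P i ω)) :=
          (lintegral_map (ENNReal.measurable_ofReal.comp hgmeas) hTmeas).symm
      _ = ∫⁻ p, ENNReal.ofReal (g p) ∂(Measure.pi ν) := by rw [hmap]
      _ = ∫⁻ p, ∑ i ∈ I₀, SDP.fF α i p ∂(Measure.pi ν) := by
          refine lintegral_congr fun p => ?_
          rw [hgdef]
          exact SDP.ofReal_g_eq α I₀ p
  have hib : ∀ i ∈ I₀, ∫⁻ p, SDP.fF α i p ∂(Measure.pi ν)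
      ≤ ENNReal.ofReal q * ∫⁻ p, SDP.hH α i p ∂(Measure.pi ν) := by
    intro i hi
    have hνi : ν i = volume.restrict (Set.Icc (0 : ℝ) 1) := hunif i hi
    have hmargle : (∫⋯∫⁻_{i}, SDP.fF α i ∂ν)
        ≤ ∫⋯∫⁻_{i}, (fun p => ENNReal.ofReal q * SDP.hH α i p) ∂ν := by
      rw [lmarginal_singleton, lmarginal_singleton]
      refine Pi.le_def.2 fun x => ?_
      have hmeps : Measurable fun u => SDP.hH α i (Function.update x i u) :=
        (SDP.measurable_hH α i).comp (measurable_update x)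
      calc ∫⁻ u, SDP.fF α i (Function.update x i u) ∂ν i
          ≤ ENNReal.ofReal q * ∫⁻ u, SDP.hH α i (Function.update x i u) ∂ν i := by
            rw [hνi]
            exact SDP.inner_bound α hm hαmono hαrange hq0 hαcond i x
        _ = ∫⁻ u, ENNReal.ofReal q * SDP.hH α i (Function.update x i u) ∂ν i :=
            (lintegral_const_mul _ hmeps).symm
    have hll := lintegral_le_of_lmarginal_le {i} (SDP.measurable_fF α i)
      (Measurable.const_mul (SDP.measurable_hH α i) _) hmargle
    calc ∫⁻ p, SDP.fF α i p ∂(Measure.pi ν)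
        ≤ ∫⁻ p, ENNReal.ofReal q * SDP.hH α i p ∂(Measure.pi ν) := hll
      _ = ENNReal.ofReal q * ∫⁻ p, SDP.hH α i p ∂(Measure.pi ν) :=
          lintegral_const_mul _ (SDP.measurable_hH α i)
  have htot : ∫⁻ p, ∑ i ∈ I₀, SDP.fF α i p ∂(Measure.pi ν) ≤ ENNReal.ofReal q := by
    calc ∫⁻ p, ∑ i ∈ I₀, SDP.fF α i p ∂(Measure.pi ν)
        = ∑ i ∈ I₀, ∫⁻ p, SDP.fF α i p ∂(Measure.pi ν) :=
          lintegral_finset_sum _ (fun i _ => SDP.measurable_fF α i)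
      _ ≤ ∑ i ∈ I₀, ENNReal.ofReal q * ∫⁻ p, SDP.hH α i p ∂(Measure.pi ν) :=
          Finset.sum_le_sum hib
      _ = ENNReal.ofReal q * ∑ i ∈ I₀, ∫⁻ p, SDP.hH α i p ∂(Measure.pi ν) :=
          (Finset.mul_sum _ _ _).symm
      _ = ENNReal.ofReal q * ∫⁻ p, ∑ i ∈ I₀, SDP.hH α i p ∂(Measure.pi ν) := by
          rw [lintegral_finset_sum _ (fun i _ => SDP.measurable_hH α i)]
      _ ≤ ENNReal.ofReal q * ∫⁻ _p, (1 : ℝ≥0∞) ∂(Measure.pi ν) := by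
          refine mul_le_mul_right (lintegral_mono fun p => ?_) _
          exact SDP.lemmaM α hm hαmono I₀ p
      _ = ENNReal.ofReal q := by
          rw [lintegral_one, measure_univ, mul_one]
  rw [h1, h2]
  calc (∫⁻ p, ∑ i ∈ I₀, SDP.fF α i p ∂(Measure.pi ν)).toReal
      ≤ (ENNReal.ofReal q).toReal := ENNReal.toReal_mono ENNReal.ofReal_ne_top htot
    _ = q := ENNReal.toReal_ofReal hq0.le
end

section
/- If α_i/(1-α_i) = iq/(m-i+β_m) with β_m ≥ m(1-q) and the p-values are PRDS on the set of null p-values, each null p-value stochastically dominated by Uniform[0,1], then the step-down procedure with these critical values has FDR ≤ m_0 q/(β_m + mq) ≤ q, where m_0 = |I_0|. -/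
open MeasureTheory ProbabilityTheory

section StepDownProofs
open Finset


lemma orderStat_le_iff {m : ℕ} (p : Fin m → ℝ) (k : Fin m) (t : ℝ) :
    orderStat p k ≤ t ↔ (k : ℕ) + 1 ≤ (univ.filter fun i => p i ≤ t).card := by
  have hmono := Tuple.monotone_sort p
  have hcard : (univ.filter fun j : Fin m => p (Tuple.sort p j) ≤ t).card
      = (univ.filter fun i => p i ≤ t).card := by
    apply Finset.card_bij (fun j _ => Tuple.sort p j)
    · intro a ha; simp only [mem_filter, mem_univ, true_and] at ha ⊢; exact ha
    · intro a _ b _ h; exact (Tuple.sort p).injective h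
    · intro b hb
      refine ⟨(Tuple.sort p).symm b, ?_, by simp⟩
      simp only [mem_filter, mem_univ, true_and] at hb ⊢
      simpa using hb
  constructor
  · intro h
    rw [← hcard]
    have hsub : Finset.Iic k ⊆ univ.filter fun j : Fin m => p (Tuple.sort p j) ≤ t := by
      intro j hj
      simp only [mem_filter, mem_univ, true_and]
      exact le_trans (hmono (Finset.mem_Iic.mp hj)) h
    calc (k:ℕ) + 1 = (Finset.Iic k).card := (Fin.card_Iic k).symm
    _ ≤ _ := Finset.card_le_card hsub
  · intro h
    by_contra hlt
    push_neg at hlt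
    have hsub : (univ.filter fun j : Fin m => p (Tuple.sort p j) ≤ t) ⊆ Finset.Iio k := by
      intro j hj
      simp only [mem_filter, mem_univ, true_and] at hj
      rw [Finset.mem_Iio]
      by_contra hk
      push_neg at hk
      exact absurd (le_trans (hmono hk) hj) (not_le.mpr hlt)
    have := Finset.card_le_card hsub
    rw [hcard, Fin.card_Iio] at this
    omega

lemma orderStat_mono {m : ℕ} {p p' : Fin m → ℝ} (h : p ≤ p') (k : Fin m) :
    orderStat p k ≤ orderStat p' k := by
  rw [orderStat_le_iff]
  refine le_trans ((orderStat_le_iff p' k _).mp le_rfl) (Finset.card_le_card ?_)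
  intro i hi
  simp only [mem_filter, mem_univ, true_and] at hi ⊢
  exact le_trans (h i) hi

lemma measurable_orderStat {m : ℕ} (k : Fin m) :
    Measurable fun p : Fin m → ℝ => orderStat p k := by
  apply measurable_of_Iic
  intro t
  have : (fun p : Fin m → ℝ => orderStat p k) ⁻¹' Set.Iic t
      = ⋃ S ∈ (Finset.univ : Finset (Fin m)).powersetCard ((k:ℕ)+1),
          ⋂ i ∈ S, {p : Fin m → ℝ | p i ≤ t} := by
    ext p
    simp only [Set.mem_preimage, Set.mem_Iic, orderStat_le_iff, Set.mem_iUnion, Set.mem_iInter,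
      Finset.mem_powersetCard, Set.mem_setOf_eq]
    constructor
    · intro h
      obtain ⟨S, hS, hcard⟩ := Finset.exists_subset_card_eq h
      exact ⟨S, ⟨fun x _ => mem_univ x, hcard⟩, fun i hi => by
        have := hS hi; simpa using (Finset.mem_filter.mp this).2⟩
    · rintro ⟨S, ⟨-, hcard⟩, hS⟩
      calc (k:ℕ)+1 = S.card := hcard.symm
      _ ≤ _ := Finset.card_le_card (fun i hi => Finset.mem_filter.mpr ⟨mem_univ i, hS i hi⟩)
  rw [this]
  exact MeasurableSet.biUnion (Finset.countable_toSet _)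
    (fun S _ => MeasurableSet.biInter (Finset.countable_toSet _)
      (fun i _ => measurableSet_le (measurable_pi_apply i) measurable_const))




variable {m : ℕ} {α : ℕ → ℝ}

def Sset (m : ℕ) (α : ℕ → ℝ) (p : Fin m → ℝ) : Set ℕ :=
  {i : ℕ | i ≤ m ∧ ∀ j : Fin m, (j : ℕ) < i → orderStat p j ≤ α ((j : ℕ) + 1)}

lemma rejCount_eq (p : Fin m → ℝ) : rejCount m α p = sSup (Sset m α p) := rfl

lemma zero_mem (p : Fin m → ℝ) : 0 ∈ Sset m α p := ⟨Nat.zero_le _, fun j hj => by omega⟩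

lemma bddAbove_Sset (p : Fin m → ℝ) : BddAbove (Sset m α p) :=
  ⟨m, fun i hi => hi.1⟩

lemma rejCount_mem (p : Fin m → ℝ) : rejCount m α p ∈ Sset m α p :=
  Nat.sSup_mem ⟨0, zero_mem p⟩ (bddAbove_Sset p)

lemma rejCount_le (p : Fin m → ℝ) : rejCount m α p ≤ m := (rejCount_mem p).1

lemma le_rejCount {p : Fin m → ℝ} {i : ℕ} (hi : i ∈ Sset m α p) : i ≤ rejCount m α p :=
  le_csSup (bddAbove_Sset p) hi

lemma Sset_downset {p : Fin m → ℝ} {i i' : ℕ} (h : i ∈ Sset m α p) (h' : i' ≤ i) :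
    i' ∈ Sset m α p := ⟨le_trans h' h.1, fun j hj => h.2 j (lt_of_lt_of_le hj h')⟩

lemma rejCount_eq_iff {p : Fin m → ℝ} {r : ℕ} :
    rejCount m α p = r ↔ r ∈ Sset m α p ∧ (r + 1) ∉ Sset m α p := by
  constructor
  · rintro rfl
    refine ⟨rejCount_mem p, fun hc => ?_⟩
    have := le_rejCount hc; omega
  · rintro ⟨h1, h2⟩
    have hle : r ≤ rejCount m α p := le_rejCount h1
    rcases Nat.lt_or_ge r (rejCount m α p) with h | h
    · exact absurd (Sset_downset (rejCount_mem p) (by omega)) h2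
    · omega

lemma rejCount_antitone {p p' : Fin m → ℝ} (h : p ≤ p') :
    rejCount m α p' ≤ rejCount m α p := by
  apply le_rejCount
  obtain ⟨h1, h2⟩ := rejCount_mem (α := α) p'
  exact ⟨h1, fun j hj => le_trans (orderStat_mono h j) (h2 j hj)⟩

lemma measurableSet_Sset (i : ℕ) :
    MeasurableSet {p : Fin m → ℝ | i ∈ Sset m α p} := by
  have : {p : Fin m → ℝ | i ∈ Sset m α p}
      = {p : Fin m → ℝ | i ≤ m} ∩ ⋂ j : Fin m, ⋂ (_ : (j:ℕ) < i), {p | orderStat p j ≤ α ((j:ℕ)+1)} := by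
    ext p
    simp only [Sset, Set.mem_setOf_eq, Set.mem_inter_iff, Set.mem_iInter]
  rw [this]
  refine MeasurableSet.inter ?_ (MeasurableSet.iInter fun j => MeasurableSet.iInter fun _ => ?_)
  · by_cases h : i ≤ m <;> simp [h]
  · exact measurableSet_le (measurable_orderStat j) measurable_const

lemma measurable_rejCount : Measurable (rejCount m α) := by
  apply measurable_to_countable'
  intro r
  have : rejCount m α ⁻¹' {r} = {p : Fin m → ℝ | r ∈ Sset m α p} \ {p | (r+1) ∈ Sset m α p} := by
    ext p
    simp only [Set.mem_preimage, Set.mem_singleton_iff, Set.mem_diff, Set.mem_setOf_eq]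
    exact rejCount_eq_iff
  rw [this]
  exact (measurableSet_Sset r).diff (measurableSet_Sset (r+1))






lemma alpha_le {m : ℕ} (hm : 1 ≤ m) {q β : ℝ} (hq0 : 0 < q) (hq1 : q < 1)
    (hβ : (m : ℝ) * (1 - q) ≤ β) {α : ℕ → ℝ}
    (hα : ∀ i : ℕ, 1 ≤ i → i ≤ m →
      (0 < α i ∧ α i < 1) ∧ α i / (1 - α i) = (i : ℝ) * q / ((m : ℝ) - (i : ℝ) + β))
    {r : ℕ} (hr1 : 1 ≤ r) (hrm : r ≤ m) :
    α r ≤ q / (β + (m : ℝ) * q) * r := by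
  obtain ⟨⟨ha0, ha1⟩, he⟩ := hα r hr1 hrm
  set B : ℝ := (m : ℝ) - (r : ℝ) + β with hB
  have hrq : (0:ℝ) < (r:ℝ) * q := by positivity
  have h1a : (0:ℝ) < 1 - α r := by linarith
  have hBpos : 0 < B := by
    by_contra h
    push_neg at h
    have hlhs : 0 < α r / (1 - α r) := by positivity
    rcases eq_or_lt_of_le h with h' | h'
    · rw [he, h'] at hlhs
      simp at hlhs
    · have : (r:ℝ) * q / B < 0 := div_neg_of_pos_of_neg hrq h'
      rw [he] at hlhs; linarith
  have hsolve : α r = (r:ℝ) * q / (B + (r:ℝ) * q) := by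
    have h2 : α r * B = (r:ℝ) * q * (1 - α r) := by
      field_simp at he
      linarith [he]
    field_simp
    linarith
  have hden0 : (0:ℝ) < β + (m:ℝ) * q := by
    have : (1:ℝ) ≤ (m:ℝ) := by exact_mod_cast hm
    nlinarith
  have hden1 : β + (m:ℝ) * q ≤ B + (r:ℝ) * q := by
    have hrm' : (r:ℝ) ≤ (m:ℝ) := by exact_mod_cast hrm
    have : 0 ≤ ((m:ℝ) - r) * (1 - q) := by nlinarith
    simp only [hB]; nlinarith
  rw [hsolve, div_mul_eq_mul_div, mul_comm q (r:ℝ)]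
  exact div_le_div_of_nonneg_left (le_of_lt hrq) hden0 hden1 |>.trans_eq rfl

lemma pointwise_bound {m : ℕ} {α : ℕ → ℝ} {c : ℝ} (I₀ : Finset (Fin m))
    (hαc : ∀ r : ℕ, 1 ≤ r → r ≤ m → α r ≤ c * r) (p : Fin m → ℝ) :
    (if 0 < rejCount m α p then
      (falseRejCount m α I₀ p : ℝ) / (rejCount m α p : ℝ) else 0)
    ≤ ∑ i ∈ I₀, (if p i ≤ c * (max (rejCount m α p) 1 : ℕ) then
        ((max (rejCount m α p) 1 : ℕ) : ℝ)⁻¹ else 0) := by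
  have hRle : rejCount m α p ≤ m := by
    have h := Nat.sSup_mem (s := {i : ℕ | i ≤ m ∧ ∀ j : Fin m, (j : ℕ) < i →
        orderStat p j ≤ α ((j : ℕ) + 1)}) ⟨0, ⟨Nat.zero_le _, fun j hj => by omega⟩⟩
        ⟨m, fun i hi => hi.1⟩
    exact h.1
  by_cases hR : 0 < rejCount m α p
  · set R := rejCount m α p with hRdef
    have hmax : max R 1 = R := Nat.max_eq_left hR
    rw [if_pos hR, hmax]
    have hVcard : (falseRejCount m α I₀ p : ℝ)
        = ∑ i ∈ I₀, (if p i ≤ α R then (1:ℝ) else 0) := by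
      rw [falseRejCount, Finset.card_filter]
      push_cast
      rfl
    rw [hVcard, Finset.sum_div]
    apply Finset.sum_le_sum
    intro i _
    by_cases hp : p i ≤ α R
    · rw [if_pos hp, if_pos]
      · rw [one_div]
      · exact le_trans hp (by simpa [mul_comm] using hαc R hR hRle)
    · rw [if_neg hp]
      simp only [zero_div]
      positivity
  · rw [if_neg hR]
    apply Finset.sum_nonneg
    intro i _
    split_ifs <;> positivity





lemma integrable_of_bdd {Ω : Type*} [MeasurableSpace Ω] {μ : Measure Ω} [IsFiniteMeasure μ]
    {f : Ω → ℝ} (hf : Measurable f) {C : ℝ} (h : ∀ ω, |f ω| ≤ C) : Integrable f μ :=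
  ⟨hf.aestronglyMeasurable, HasFiniteIntegral.of_bounded (C := C) (Filter.Eventually.of_forall
    (fun ω => by simpa [Real.norm_eq_abs] using h ω))⟩

lemma integral_if_lt {a : ℝ} (h0 : 0 ≤ a) (h1 : a ≤ 1) :
    ∫ l, (if l < a then (1:ℝ) else 0) ∂(volume.restrict (Set.Ioo (0:ℝ) 1)) = a := by
  have h : (fun l : ℝ => if l < a then (1:ℝ) else 0)
      = (Set.Iio a).indicator (fun _ => (1:ℝ)) := by
    funext l; simp [Set.indicator_apply, Set.mem_Iio]
  rw [h, integral_indicator_const (1:ℝ) measurableSet_Iio, measureReal_def, Measure.restrict_apply measurableSet_Iio]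
  have : Set.Iio a ∩ Set.Ioo (0:ℝ) 1 = Set.Ioo 0 a := by
    ext l
    simp only [Set.mem_inter_iff, Set.mem_Iio, Set.mem_Ioo]
    constructor
    · rintro ⟨h2, h3, h4⟩; exact ⟨h3, h2⟩
    · rintro ⟨h2, h3⟩; exact ⟨h3, h2, lt_of_lt_of_le h3 h1⟩
  rw [this, Real.volume_Ioo, smul_eq_mul, mul_one, sub_zero, ENNReal.toReal_ofReal h0]

variable {Ω : Type*} [MeasurableSpace Ω] (μ : Measure Ω) [IsProbabilityMeasure μ]

lemma core (m : ℕ) (hm : 1 ≤ m) {c : ℝ} (hc : 0 < c)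
    (X : Ω → ℝ) (hX : Measurable X)
    (hnullX : ∀ t : ℝ, 0 ≤ t → μ {ω | X ω ≤ t} ≤ ENNReal.ofReal t)
    (d : ℕ → ℝ → ℝ)
    (hd0 : ∀ u, d 0 u = 0) (hdm : ∀ u, d m u = 1)
    (hdu : ∀ k, k ≤ m → Monotone (d k))
    (hdk : ∀ k, k < m → ∀ u, d k u ≤ d (k+1) u)
    (hd01 : ∀ k, k ≤ m → ∀ u, 0 ≤ d k u ∧ d k u ≤ 1) :
    ∫ ω, (∑ k ∈ Finset.Icc 1 m, ((k:ℝ))⁻¹ * ((if X ω ≤ c * (k:ℝ) then (1:ℝ) else 0)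
      * (d k (X ω) - d (k-1) (X ω)))) ∂μ ≤ c := by
  classical
  set η : Measure ℝ := volume.restrict (Set.Ioo (0:ℝ) 1) with hη
  haveI hηprob : IsProbabilityMeasure η := by
    constructor
    rw [hη, Measure.restrict_apply_univ]
    simp [Real.volume_Ioo]
  -- chain monotonicity in k
  have hchain : ∀ a b : ℕ, a ≤ b → b ≤ m → ∀ u, d a u ≤ d b u := by
    intro a b hab hbm u
    have key : ∀ n : ℕ, a + n ≤ m → d a u ≤ d (a + n) u := by
      intro n
      induction n with
      | zero => intro _; simp
      | succ n ih =>
        intro h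
        refine (ih (by omega)).trans ?_
        have h3 := hdk (a+n) (by omega) u
        have h4 : a + (n+1) = (a + n) + 1 := by omega
        rw [h4]
        exact h3
    have h2 := key (b - a) (by omega)
    rwa [Nat.add_sub_cancel' hab] at h2
  have hdmeas : ∀ k, k ≤ m → Measurable (d k) := fun k hk => (hdu k hk).measurable
  -- the level function
  set Uf : ℝ → ℝ → ℕ := fun l u => sInf {k : ℕ | 1 ≤ k ∧ l < d k u} with hUf
  have hUmem : ∀ l u, l < 1 → 1 ≤ Uf l u ∧ l < d (Uf l u) u := by
    intro l u hl
    exact Nat.sInf_mem (s := {k : ℕ | 1 ≤ k ∧ l < d k u}) ⟨m, hm, by rw [hdm]; exact hl⟩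
  have hUlem : ∀ l u, l < 1 → Uf l u ≤ m := by
    intro l u hl
    exact Nat.sInf_le ⟨hm, by rw [hdm]; exact hl⟩
  have hUiff : ∀ l u, l < 1 → ∀ k, 1 ≤ k → k ≤ m → (l < d k u ↔ Uf l u ≤ k) := by
    intro l u hl k hk1 hkm
    constructor
    · intro h; exact Nat.sInf_le ⟨hk1, h⟩
    · intro h
      exact lt_of_lt_of_le (hUmem l u hl).2 (hchain _ _ h hkm u)
  have hUanti : ∀ l, l < 1 → ∀ u v : ℝ, u ≤ v → Uf l v ≤ Uf l u := by
    intro l hl u v huv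
    obtain ⟨h1, h2⟩ := hUmem l u hl
    exact Nat.sInf_le ⟨h1, lt_of_lt_of_le h2 (hdu _ (hUlem l u hl) huv)⟩
  -- measurability of Uf l ∘ X etc.
  have hUfmeas : ∀ l, l < 1 → Measurable (fun u => Uf l u) := by
    intro l hl
    apply measurable_to_countable'
    intro r
    have : (fun u => Uf l u) ⁻¹' {r} = {u : ℝ | Uf l u = r} := rfl
    rw [this]
    apply Set.OrdConnected.measurableSet
    constructor
    intro x hx y hy z hz
    have h1 := hUanti l hl x z hz.1
    have h2 := hUanti l hl z y hz.2
    simp only [Set.mem_setOf_eq] at hx hy ⊢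
    omega
  -- pointwise identity per level
  have hptid : ∀ l : ℝ, 0 ≤ l → l < 1 → ∀ u : ℝ,
      (∑ k ∈ Finset.Icc 1 m, ((k:ℝ))⁻¹ * ((if u ≤ c * (k:ℝ) then (1:ℝ) else 0)
        * ((if l < d k u then (1:ℝ) else 0) - (if l < d (k-1) u then (1:ℝ) else 0))))
      = (if u ≤ c * (Uf l u : ℝ) then ((Uf l u : ℝ))⁻¹ else 0) := by
    intro l h0 h1 u
    set r := Uf l u with hr
    obtain ⟨hr1, hrd⟩ := hUmem l u h1
    have hrm := hUlem l u h1
    rw [Finset.sum_eq_single_of_mem r (Finset.mem_Icc.mpr ⟨hr1, hrm⟩)]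
    · have e1 : (if l < d r u then (1:ℝ) else 0) = 1 := if_pos hrd
      have e2 : (if l < d (r-1) u then (1:ℝ) else 0) = 0 := by
        apply if_neg
        rcases Nat.lt_or_ge r 2 with h | h
        · have hz : r - 1 = 0 := by omega
          rw [hz, hd0]
          linarith
        · intro hcon
          have := (hUiff l u h1 (r-1) (by omega) (by omega)).mp hcon
          omega
      rw [e1, e2, sub_zero, mul_one]
      split_ifs with h
      · rw [mul_one]
      · rw [mul_zero]
    · intro b hb hbr
      rw [Finset.mem_Icc] at hb
      rcases lt_or_gt_of_ne hbr with hlt | hgt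
      · have e1 : (if l < d b u then (1:ℝ) else 0) = 0 := by
          apply if_neg
          intro hcon
          have := (hUiff l u h1 b hb.1 hb.2).mp hcon
          omega
        have e2 : (if l < d (b-1) u then (1:ℝ) else 0) = 0 := by
          apply if_neg
          rcases Nat.lt_or_ge b 2 with h | h
          · have hz : b - 1 = 0 := by omega
            rw [hz, hd0]
            linarith
          · intro hcon
            have := (hUiff l u h1 (b-1) (by omega) (by omega)).mp hcon
            omega
        rw [e1, e2]; ring
      · have e1 : (if l < d b u then (1:ℝ) else 0) = 1 :=
          if_pos ((hUiff l u h1 b hb.1 hb.2).mpr (by omega))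
        have e2 : (if l < d (b-1) u then (1:ℝ) else 0) = 1 :=
          if_pos ((hUiff l u h1 (b-1) (by omega) (by omega)).mpr (by omega))
        rw [e1, e2]; ring
  -- per level integral bound
  have hlevel : ∀ l : ℝ, 0 ≤ l → l < 1 →
      ∫ ω, (if X ω ≤ c * (Uf l (X ω) : ℝ) then ((Uf l (X ω) : ℝ))⁻¹ else 0) ∂μ ≤ c := by
    intro l h0 h1
    set B : Set ℝ := {u | u ≤ c * (Uf l u : ℝ)} with hB
    have hBc : c ∈ B := by
      simp only [hB, Set.mem_setOf_eq]
      have : (1:ℝ) ≤ (Uf l c : ℝ) := by exact_mod_cast (hUmem l c h1).1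
      nlinarith
    have hBbdd : BddAbove B := by
      refine ⟨c * m, fun u hu => ?_⟩
      simp only [hB, Set.mem_setOf_eq] at hu
      have : (Uf l u : ℝ) ≤ (m:ℝ) := by exact_mod_cast hUlem l u h1
      nlinarith
    set x₀ := sSup B with hx₀
    have hcx : c ≤ x₀ := le_csSup hBbdd hBc
    have hx0pos : 0 < x₀ := lt_of_lt_of_le hc hcx
    have hkey : ∀ u ∈ B, x₀ ≤ c * (Uf l u : ℝ) := by
      intro u hu
      apply csSup_le ⟨c, hBc⟩
      intro v hv
      rcases le_total v u with h | h
      · exact le_trans h hu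
      · refine le_trans hv ?_
        have : (Uf l v : ℝ) ≤ (Uf l u : ℝ) := by exact_mod_cast hUanti l h1 u v h
        nlinarith
    have hpt : ∀ ω, (if X ω ≤ c * (Uf l (X ω) : ℝ) then ((Uf l (X ω) : ℝ))⁻¹ else 0)
        ≤ (c / x₀) * (if X ω ≤ x₀ then (1:ℝ) else 0) := by
      intro ω
      by_cases h : X ω ≤ c * (Uf l (X ω) : ℝ)
      · have hXB : X ω ∈ B := h
        have hXx0 : X ω ≤ x₀ := le_csSup hBbdd hXB
        rw [if_pos h, if_pos hXx0, mul_one]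
        have hUpos : (0:ℝ) < (Uf l (X ω) : ℝ) := by
          exact_mod_cast Nat.lt_of_lt_of_le Nat.zero_lt_one (hUmem l (X ω) h1).1
        have h2 : ((Uf l (X ω) : ℝ))⁻¹ * (c * (Uf l (X ω) : ℝ)) = c := by
          field_simp
        rw [le_div_iff₀ hx0pos]
        calc ((Uf l (X ω) : ℝ))⁻¹ * x₀ ≤ ((Uf l (X ω) : ℝ))⁻¹ * (c * (Uf l (X ω) : ℝ)) :=
              mul_le_mul_of_nonneg_left (hkey _ hXB) (by positivity)
        _ = c := h2
      · rw [if_neg h]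
        split_ifs <;> positivity
    have hUXmeas : Measurable (fun ω => Uf l (X ω)) := (hUfmeas l h1).comp hX
    have hmeasL : Measurable (fun ω => (if X ω ≤ c * (Uf l (X ω) : ℝ) then ((Uf l (X ω) : ℝ))⁻¹ else 0)) := by
      apply Measurable.ite
      · exact measurableSet_le hX ((measurable_of_countable (fun n : ℕ => c * (n:ℝ))).comp hUXmeas)
      · exact (measurable_of_countable (fun n : ℕ => ((n:ℝ))⁻¹)).comp hUXmeas
      · exact measurable_const
    have hintL : Integrable (fun ω => (if X ω ≤ c * (Uf l (X ω) : ℝ) then ((Uf l (X ω) : ℝ))⁻¹ else 0)) μ := by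
      apply integrable_of_bdd hmeasL (C := 1)
      intro ω
      split_ifs with h
      · have hle : (1:ℝ) ≤ (Uf l (X ω) : ℝ) := by exact_mod_cast (hUmem l (X ω) h1).1
        rw [abs_of_nonneg (by positivity)]
        exact inv_le_one_of_one_le₀ hle
      · simp
    have hmeasR : Measurable (fun ω => (c / x₀) * (if X ω ≤ x₀ then (1:ℝ) else 0)) := by
      apply Measurable.const_mul
      exact Measurable.ite (measurableSet_le hX measurable_const) measurable_const measurable_const
    have hintR : Integrable (fun ω => (c / x₀) * (if X ω ≤ x₀ then (1:ℝ) else 0)) μ := by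
      apply integrable_of_bdd hmeasR (C := c / x₀)
      intro ω
      have hdn : (0:ℝ) ≤ c / x₀ := by positivity
      split_ifs <;> simp [abs_of_nonneg hdn, hdn]
    calc ∫ ω, (if X ω ≤ c * (Uf l (X ω) : ℝ) then ((Uf l (X ω) : ℝ))⁻¹ else 0) ∂μ
        ≤ ∫ ω, (c / x₀) * (if X ω ≤ x₀ then (1:ℝ) else 0) ∂μ :=
          integral_mono hintL hintR hpt
    _ = (c / x₀) * ∫ ω, (if X ω ≤ x₀ then (1:ℝ) else 0) ∂μ := integral_const_mul _ _
    _ = (c / x₀) * (μ {ω | X ω ≤ x₀}).toReal := by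
          congr 1
          have h : (fun ω => if X ω ≤ x₀ then (1:ℝ) else 0)
              = Set.indicator {ω | X ω ≤ x₀} (fun _ => (1:ℝ)) := by
            funext ω; simp [Set.indicator_apply, Set.mem_setOf_eq]
          rw [h, integral_indicator_const (1:ℝ) (measurableSet_le hX measurable_const),
            smul_eq_mul, mul_one, measureReal_def]
    _ ≤ (c / x₀) * x₀ := by
          have h2 := hnullX x₀ (le_of_lt hx0pos)
          have h3 : (μ {ω | X ω ≤ x₀}).toReal ≤ x₀ := by
            calc (μ {ω | X ω ≤ x₀}).toReal ≤ (ENNReal.ofReal x₀).toReal :=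
                  ENNReal.toReal_mono ENNReal.ofReal_ne_top h2
            _ = x₀ := ENNReal.toReal_ofReal (le_of_lt hx0pos)
          exact mul_le_mul_of_nonneg_left h3 (by positivity)
    _ = c := div_mul_cancel₀ c (ne_of_gt hx0pos)
  -- the product function
  set F : Ω → ℝ → ℝ := fun ω l => ∑ k ∈ Finset.Icc 1 m, ((k:ℝ))⁻¹ *
      ((if X ω ≤ c * (k:ℝ) then (1:ℝ) else 0)
        * ((if l < d k (X ω) then (1:ℝ) else 0) - (if l < d (k-1) (X ω) then (1:ℝ) else 0))) with hF
  have hFmeas : Measurable (Function.uncurry F) := by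
    apply Finset.measurable_sum
    intro k hk
    rw [Finset.mem_Icc] at hk
    apply Measurable.const_mul
    apply Measurable.mul
    · exact Measurable.ite (measurableSet_le (hX.comp measurable_fst) measurable_const)
        measurable_const measurable_const
    · apply Measurable.sub <;>
      · apply Measurable.ite _ measurable_const measurable_const
        first
        | exact measurableSet_lt measurable_snd (((hdmeas k (by omega)).comp (hX.comp measurable_fst)))
        | exact measurableSet_lt measurable_snd (((hdmeas (k-1) (by omega)).comp (hX.comp measurable_fst)))
  have hFbdd : ∀ z : Ω × ℝ, |Function.uncurry F z| ≤ (m:ℝ) := by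
    rintro ⟨ω, l⟩
    calc |Function.uncurry F (ω, l)| ≤ ∑ k ∈ Finset.Icc 1 m, |((k:ℝ))⁻¹ *
        ((if X ω ≤ c * (k:ℝ) then (1:ℝ) else 0)
          * ((if l < d k (X ω) then (1:ℝ) else 0) - (if l < d (k-1) (X ω) then (1:ℝ) else 0)))| :=
          Finset.abs_sum_le_sum_abs _ _
    _ ≤ ∑ k ∈ Finset.Icc 1 m, 1 := by
          apply Finset.sum_le_sum
          intro k hk
          rw [Finset.mem_Icc] at hk
          have h1 : ((k:ℝ))⁻¹ ≤ 1 := inv_le_one_of_one_le₀ (by exact_mod_cast hk.1)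
          have h0 : (0:ℝ) ≤ ((k:ℝ))⁻¹ := by positivity
          rw [abs_mul, abs_mul, abs_of_nonneg h0]
          have hb1 : |(if X ω ≤ c * (k:ℝ) then (1:ℝ) else 0)| ≤ 1 := by split_ifs <;> simp
          have hb2 : |((if l < d k (X ω) then (1:ℝ) else 0) - (if l < d (k-1) (X ω) then (1:ℝ) else 0))| ≤ 1 := by
            split_ifs <;> simp
          have n1 : (0:ℝ) ≤ |(if X ω ≤ c * (k:ℝ) then (1:ℝ) else 0)| := abs_nonneg _
          have n2 : (0:ℝ) ≤ |((if l < d k (X ω) then (1:ℝ) else 0) - (if l < d (k-1) (X ω) then (1:ℝ) else 0))| := abs_nonneg _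
          have hab : |(if X ω ≤ c * (k:ℝ) then (1:ℝ) else 0)| *
              |((if l < d k (X ω) then (1:ℝ) else 0) - (if l < d (k-1) (X ω) then (1:ℝ) else 0))| ≤ 1 := by
            nlinarith
          nlinarith
    _ ≤ (m:ℝ) := by
          rw [Finset.sum_const, Nat.card_Icc]
          simp
  have hFint : Integrable (Function.uncurry F) (μ.prod η) :=
    integrable_of_bdd hFmeas hFbdd
  -- pointwise: G ω = ∫ l, F ω l ∂η
  have hGpt : ∀ ω, (∑ k ∈ Finset.Icc 1 m, ((k:ℝ))⁻¹ * ((if X ω ≤ c * (k:ℝ) then (1:ℝ) else 0)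
      * (d k (X ω) - d (k-1) (X ω)))) = ∫ l, F ω l ∂η := by
    intro ω
    have hterm : ∀ k ∈ Finset.Icc 1 m,
        ((k:ℝ))⁻¹ * ((if X ω ≤ c * (k:ℝ) then (1:ℝ) else 0) * (d k (X ω) - d (k-1) (X ω)))
        = ∫ l, ((k:ℝ))⁻¹ * ((if X ω ≤ c * (k:ℝ) then (1:ℝ) else 0)
            * ((if l < d k (X ω) then (1:ℝ) else 0) - (if l < d (k-1) (X ω) then (1:ℝ) else 0))) ∂η := by
      intro k hk
      rw [Finset.mem_Icc] at hk
      have hi1 : Integrable (fun l => (if l < d k (X ω) then (1:ℝ) else 0)) η := by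
        apply integrable_of_bdd (C := 1)
        · exact Measurable.ite measurableSet_Iio measurable_const measurable_const
        · intro l; split_ifs <;> simp
      have hi2 : Integrable (fun l => (if l < d (k-1) (X ω) then (1:ℝ) else 0)) η := by
        apply integrable_of_bdd (C := 1)
        · exact Measurable.ite measurableSet_Iio measurable_const measurable_const
        · intro l; split_ifs <;> simp
      rw [integral_const_mul]
      congr 1
      rw [integral_const_mul]
      congr 1
      rw [integral_sub hi1 hi2]
      obtain ⟨ha0, ha1⟩ := hd01 k (by omega) (X ω)
      obtain ⟨hb0, hb1⟩ := hd01 (k-1) (by omega) (X ω)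
      rw [hη]
      rw [integral_if_lt ha0 ha1, integral_if_lt hb0 hb1]
    rw [Finset.sum_congr rfl hterm]
    rw [hF]
    rw [← integral_finset_sum]
    intro k hk
    rw [Finset.mem_Icc] at hk
    apply integrable_of_bdd (C := 1)
    · apply Measurable.const_mul
      apply Measurable.const_mul
      apply Measurable.sub <;> exact Measurable.ite measurableSet_Iio measurable_const measurable_const
    · intro l
      have h1 : ((k:ℝ))⁻¹ ≤ 1 := inv_le_one_of_one_le₀ (by exact_mod_cast hk.1)
      have h0 : (0:ℝ) ≤ ((k:ℝ))⁻¹ := by positivity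
      rw [abs_mul, abs_mul, abs_of_nonneg h0]
      have hb1 : |(if X ω ≤ c * (k:ℝ) then (1:ℝ) else 0)| ≤ 1 := by split_ifs <;> simp
      have hb2 : |((if l < d k (X ω) then (1:ℝ) else 0) - (if l < d (k-1) (X ω) then (1:ℝ) else 0))| ≤ 1 := by
        split_ifs <;> simp
      have n1 : (0:ℝ) ≤ |(if X ω ≤ c * (k:ℝ) then (1:ℝ) else 0)| := abs_nonneg _
      have n2 : (0:ℝ) ≤ |((if l < d k (X ω) then (1:ℝ) else 0) - (if l < d (k-1) (X ω) then (1:ℝ) else 0))| := abs_nonneg _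
      have hab : |(if X ω ≤ c * (k:ℝ) then (1:ℝ) else 0)| *
          |((if l < d k (X ω) then (1:ℝ) else 0) - (if l < d (k-1) (X ω) then (1:ℝ) else 0))| ≤ 1 := by
        nlinarith
      nlinarith
  -- swap
  calc ∫ ω, (∑ k ∈ Finset.Icc 1 m, ((k:ℝ))⁻¹ * ((if X ω ≤ c * (k:ℝ) then (1:ℝ) else 0)
      * (d k (X ω) - d (k-1) (X ω)))) ∂μ
      = ∫ ω, ∫ l, F ω l ∂η ∂μ := by
        apply integral_congr_ae
        exact Filter.Eventually.of_forall hGpt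
  _ = ∫ l, ∫ ω, F ω l ∂μ ∂η := integral_integral_swap hFint
  _ ≤ ∫ _, c ∂η := by
        apply integral_mono_ae (hFint.integral_prod_right) (integrable_const c)
        rw [hη]
        rw [Filter.EventuallyLE, ae_restrict_iff' measurableSet_Ioo]
        apply Filter.Eventually.of_forall
        intro l hl
        show (∫ ω, F ω l ∂μ) ≤ c
        have heq : ∫ ω, F ω l ∂μ
            = ∫ ω, (if X ω ≤ c * (Uf l (X ω) : ℝ) then ((Uf l (X ω) : ℝ))⁻¹ else 0) ∂μ := by
          apply integral_congr_ae
          apply Filter.Eventually.of_forall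
          intro ω
          exact hptid l (le_of_lt hl.1) hl.2 (X ω)
        rw [heq]
        exact hlevel l (le_of_lt hl.1) hl.2
  _ = c := by
        rw [integral_const]
        simp






lemma per_i {Ω : Type*} [MeasurableSpace Ω] (μ : Measure Ω) [IsProbabilityMeasure μ]
    (m : ℕ) (hm : 1 ≤ m) {c : ℝ} (hc : 0 < c)
    (X : Ω → ℝ) (hX : Measurable X)
    (hnullX : ∀ t : ℝ, 0 ≤ t → μ {ω | X ω ≤ t} ≤ ENNReal.ofReal t)
    (U : Ω → ℕ) (hUmeas : Measurable U) (hU1 : ∀ ω, 1 ≤ U ω) (hUm : ∀ ω, U ω ≤ m)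
    (hE : ∀ k, 1 ≤ k → k ≤ m - 1 → ∃ e : ℝ → ℝ, Monotone e ∧
      (fun ω => e (X ω)) =ᵐ[μ]
        μ[(fun ω => if U ω ≤ k then (1:ℝ) else 0) | MeasurableSpace.comap X inferInstance]) :
    ∫ ω, (if X ω ≤ c * (U ω : ℝ) then ((U ω : ℝ))⁻¹ else 0) ∂μ ≤ c := by
  classical
  set φ : ℕ → Ω → ℝ := fun k ω => if U ω ≤ k then 1 else 0 with hφ
  have hφmeas : ∀ k, Measurable (φ k) := by
    intro k
    apply Measurable.ite _ measurable_const measurable_const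
    exact hUmeas ((Set.to_countable _).measurableSet : MeasurableSet (Set.Iic k))
  have hφ01 : ∀ k ω, 0 ≤ φ k ω ∧ φ k ω ≤ 1 := by
    intro k ω; simp only [hφ]; split_ifs <;> norm_num
  have hφint : ∀ k, Integrable (φ k) μ := by
    intro k
    apply integrable_of_bdd (hφmeas k) (C := 1)
    intro ω
    obtain ⟨h1, h2⟩ := hφ01 k ω
    rw [abs_of_nonneg h1]; exact h2
  have hφmono : ∀ j k, j ≤ k → ∀ ω, φ j ω ≤ φ k ω := by
    intro j k hjk ω
    simp only [hφ]
    split_ifs with h1 h2 <;> try norm_num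
    · exact absurd (le_trans h1 hjk) h2
  have hle : MeasurableSpace.comap X inferInstance ≤ _ := hX.comap_le
  -- choose the monotone versions of conditional expectations
  have hE1 : ∀ k (h : 1 ≤ k ∧ k ≤ m - 1), ∃ e : ℝ → ℝ, Monotone e ∧
      (fun ω => e (X ω)) =ᵐ[μ] μ[φ k | MeasurableSpace.comap X inferInstance] :=
    fun k h => hE k h.1 h.2
  set E : ℕ → ℝ → ℝ := fun k =>
    if h : 1 ≤ k ∧ k ≤ m - 1 then (hE1 k h).choose else (fun _ => 0) with hEdef
  have hEspec : ∀ k (h : 1 ≤ k ∧ k ≤ m - 1), Monotone (E k) ∧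
      (fun ω => E k (X ω)) =ᵐ[μ] μ[φ k | MeasurableSpace.comap X inferInstance] := by
    intro k h
    simp only [hEdef, dif_pos h]
    exact (hE1 k h).choose_spec
  -- the clamped monotone family
  set d : ℕ → ℝ → ℝ := fun k u =>
    if k = 0 then 0 else
    if h : k ≤ m - 1 then
      min 1 (max 0 ((Finset.Icc k (m-1)).inf' (Finset.nonempty_Icc.mpr h) (fun j => E j u)))
    else 1 with hddef
  have hd0 : ∀ u, d 0 u = 0 := by intro u; simp [hddef]
  have hdm : ∀ u, d m u = 1 := by
    intro u
    have h1 : m ≠ 0 := by omega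
    have h2 : ¬ (m ≤ m - 1) := by omega
    simp [hddef, h1, h2]
  have hEmono : ∀ j, 1 ≤ j → j ≤ m - 1 → Monotone (E j) := fun j h1 h2 => (hEspec j ⟨h1, h2⟩).1
  have hdu : ∀ k, k ≤ m → Monotone (d k) := by
    intro k _
    rcases eq_or_ne k 0 with rfl | hk0
    · simp only [hddef, if_pos rfl]; exact monotone_const
    by_cases hk : k ≤ m - 1
    · intro u v huv
      simp only [hddef, if_neg hk0, dif_pos hk]
      have hinf : (Finset.Icc k (m-1)).inf' (Finset.nonempty_Icc.mpr hk) (fun j => E j u)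
          ≤ (Finset.Icc k (m-1)).inf' (Finset.nonempty_Icc.mpr hk) (fun j => E j v) := by
        apply Finset.le_inf'
        intro j hj
        rw [Finset.mem_Icc] at hj
        refine le_trans (Finset.inf'_le _ (Finset.mem_Icc.mpr hj)) ?_
        exact hEmono j (by omega) hj.2 huv
      exact min_le_min le_rfl (max_le_max le_rfl hinf)
    · simp only [hddef, if_neg hk0, dif_neg hk]; exact monotone_const
  have hd01 : ∀ k, k ≤ m → ∀ u, 0 ≤ d k u ∧ d k u ≤ 1 := by
    intro k _ u
    rcases eq_or_ne k 0 with rfl | hk0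
    · simp [hddef]
    by_cases hk : k ≤ m - 1
    · simp only [hddef, if_neg hk0, dif_pos hk]
      constructor
      · exact le_min (by norm_num) (le_max_left 0 _)
      · exact min_le_left _ _
    · simp [hddef, hk0, hk]
  have hdk : ∀ k, k < m → ∀ u, d k u ≤ d (k+1) u := by
    intro k hkm u
    rcases eq_or_ne k 0 with rfl | hk0
    · rw [hd0]
      exact (hd01 1 (by omega) u).1
    by_cases hk1 : k + 1 ≤ m - 1
    · have hk : k ≤ m - 1 := by omega
      simp only [hddef, if_neg hk0, dif_pos hk, if_neg (by omega : ¬ k + 1 = 0), dif_pos hk1]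
      have hinf : (Finset.Icc k (m-1)).inf' (Finset.nonempty_Icc.mpr hk) (fun j => E j u)
          ≤ (Finset.Icc (k+1) (m-1)).inf' (Finset.nonempty_Icc.mpr hk1) (fun j => E j u) := by
        apply Finset.le_inf'
        intro j hj
        rw [Finset.mem_Icc] at hj
        exact Finset.inf'_le _ (Finset.mem_Icc.mpr ⟨by omega, hj.2⟩)
      exact min_le_min le_rfl (max_le_max le_rfl hinf)
    · have h2 : ¬ (k + 1 = 0) := by omega
      simp only [hddef, if_neg h2, dif_neg hk1]
      exact (hd01 k (by omega) u).2
  -- a.e. identification of d with E on X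
  have haed : ∀ k, 1 ≤ k → k ≤ m - 1 →
      (fun ω => E k (X ω)) =ᵐ[μ] (fun ω => d k (X ω)) := by
    intro k hk1 hk2
    have hcount : ((Finset.Icc k (m-1) : Finset ℕ) : Set ℕ).Countable := (Finset.Icc k (m-1)).countable_toSet
    have hord : ∀ j ∈ ((Finset.Icc k (m-1) : Finset ℕ) : Set ℕ), ∀ᵐ ω ∂μ, E k (X ω) ≤ E j (X ω) := by
      intro j hj
      rw [Finset.coe_Icc, Set.mem_Icc] at hj
      have hφle : φ k ≤ᵐ[μ] φ j := Filter.Eventually.of_forall (hφmono k j hj.1)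
      have hcm := condExp_mono (m := MeasurableSpace.comap X inferInstance)
        (hφint k) (hφint j) hφle
      filter_upwards [(hEspec k ⟨hk1, hk2⟩).2, (hEspec j ⟨by omega, hj.2⟩).2, hcm] with ω e1 e2 e3
      rw [e1, e2]
      exact e3
    have hnn : ∀ᵐ ω ∂μ, 0 ≤ E k (X ω) := by
      have h0 : 0 ≤ᵐ[μ] μ[φ k | MeasurableSpace.comap X inferInstance] :=
        condExp_nonneg (Filter.Eventually.of_forall (fun ω => (hφ01 k ω).1))
      filter_upwards [(hEspec k ⟨hk1, hk2⟩).2, h0] with ω e1 e2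
      rw [e1]; exact e2
    have hub : ∀ᵐ ω ∂μ, E k (X ω) ≤ 1 := by
      have h1 : μ[φ k | MeasurableSpace.comap X inferInstance]
          ≤ᵐ[μ] μ[(fun _ => (1:ℝ)) | MeasurableSpace.comap X inferInstance] :=
        condExp_mono (hφint k) (integrable_const 1)
          (Filter.Eventually.of_forall (fun ω => (hφ01 k ω).2))
      rw [condExp_const hle (1:ℝ)] at h1
      filter_upwards [(hEspec k ⟨hk1, hk2⟩).2, h1] with ω e1 e2
      rw [e1]; exact e2
    have hall := (ae_ball_iff hcount).mpr hord
    filter_upwards [hall, hnn, hub] with ω hω h0 h1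
    have hkmem : k ∈ Finset.Icc k (m-1) := Finset.mem_Icc.mpr ⟨le_rfl, hk2⟩
    have hinf : (Finset.Icc k (m-1)).inf' (Finset.nonempty_Icc.mpr hk2) (fun j => E j (X ω))
        = E k (X ω) := by
      apply le_antisymm (Finset.inf'_le _ hkmem)
      exact Finset.le_inf' _ _ (fun j hj => hω j hj)
    have hk0 : k ≠ 0 := by omega
    simp only [hddef, if_neg hk0, dif_pos hk2, hinf, max_eq_right h0, min_eq_right h1]
  -- key integral identities
  have hchi : ∀ k : ℕ, Measurable (fun ω => (if X ω ≤ c * (k:ℝ) then (1:ℝ) else 0)) := by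
    intro k
    exact Measurable.ite (measurableSet_le hX measurable_const) measurable_const measurable_const
  have hint_chi : ∀ (k : ℕ) (f : Ω → ℝ), Measurable f → (∀ ω, 0 ≤ f ω ∧ f ω ≤ 1) →
      Integrable (fun ω => (if X ω ≤ c * (k:ℝ) then (1:ℝ) else 0) * f ω) μ := by
    intro k f hf hbd
    apply integrable_of_bdd ((hchi k).mul hf) (C := 1)
    intro ω
    obtain ⟨h1, h2⟩ := hbd ω
    rw [Pi.mul_apply, abs_mul]
    split_ifs with h
    · simpa [abs_of_nonneg h1] using h2
    · simp
  have hkey : ∀ (k : ℕ) (t : ℝ), k ≤ m →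
      ∫ ω, (if X ω ≤ t then (1:ℝ) else 0) * φ k ω ∂μ
      = ∫ ω, (if X ω ≤ t then (1:ℝ) else 0) * d k (X ω) ∂μ := by
    intro k t hkm
    rcases eq_or_ne k 0 with rfl | hk0
    · have e1 : ∀ ω, (if X ω ≤ t then (1:ℝ) else 0) * φ 0 ω = 0 := by
        intro ω
        have : ¬ (U ω ≤ 0) := by have := hU1 ω; omega
        simp [hφ, this]
      have e2 : ∀ ω, (if X ω ≤ t then (1:ℝ) else 0) * d 0 (X ω) = 0 := by
        intro ω; rw [hd0]; ring
      rw [integral_congr_ae (Filter.Eventually.of_forall e1),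
        integral_congr_ae (Filter.Eventually.of_forall e2)]
    rcases eq_or_lt_of_le hkm with rfl | hklt
    · apply integral_congr_ae
      apply Filter.Eventually.of_forall
      intro ω
      have h1 : φ k ω = 1 := if_pos (hUm ω)
      simp only [h1, hdm]
    -- now 1 ≤ k ≤ m - 1
    have hk2 : k ≤ m - 1 := by omega
    have hk1 : 1 ≤ k := by omega
    set A : Set Ω := X ⁻¹' Set.Iic t with hA
    have hAms : MeasurableSet[MeasurableSpace.comap X inferInstance] A :=
      ⟨Set.Iic t, measurableSet_Iic, rfl⟩
    have hAmeas : MeasurableSet A := hX measurableSet_Iic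
    have hconv : ∀ f : Ω → ℝ, (fun ω => (if X ω ≤ t then (1:ℝ) else 0) * f ω)
        = A.indicator f := by
      intro f
      funext ω
      simp only [Set.indicator_apply, hA, Set.mem_preimage, Set.mem_Iic]
      split_ifs <;> ring
    rw [hconv, hconv, integral_indicator hAmeas, integral_indicator hAmeas]
    have hstep1 : ∫ ω in A, φ k ω ∂μ
        = ∫ ω in A, (μ[φ k | MeasurableSpace.comap X inferInstance]) ω ∂μ :=
      (setIntegral_condExp hle (hφint k) hAms).symm
    have hstep2 : ∫ ω in A, (μ[φ k | MeasurableSpace.comap X inferInstance]) ω ∂μ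
        = ∫ ω in A, E k (X ω) ∂μ := by
      apply setIntegral_congr_ae hAmeas
      filter_upwards [(hEspec k ⟨hk1, hk2⟩).2] with ω e1 _
      rw [e1]
    have hstep3 : ∫ ω in A, E k (X ω) ∂μ = ∫ ω in A, d k (X ω) ∂μ := by
      apply setIntegral_congr_ae hAmeas
      filter_upwards [haed k hk1 hk2] with ω e1 _
      rw [← e1]
    rw [hstep1, hstep2, hstep3]
  -- pointwise sum decomposition
  have hsum : ∀ ω, (if X ω ≤ c * (U ω : ℝ) then ((U ω : ℝ))⁻¹ else 0)
      = ∑ k ∈ Finset.Icc 1 m, ((k:ℝ))⁻¹ * ((if X ω ≤ c * (k:ℝ) then (1:ℝ) else 0)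
          * (φ k ω - φ (k-1) ω)) := by
    intro ω
    rw [Finset.sum_eq_single_of_mem (U ω) (Finset.mem_Icc.mpr ⟨hU1 ω, hUm ω⟩)]
    · have h1 : φ (U ω) ω = 1 := if_pos le_rfl
      have h2 : φ (U ω - 1) ω = 0 := by
        apply if_neg
        have := hU1 ω
        omega
      rw [h1, h2, sub_zero, mul_one]
      split_ifs with h
      · rw [mul_one]
      · rw [mul_zero]
    · intro b hb hbne
      rw [Finset.mem_Icc] at hb
      rcases lt_or_gt_of_ne hbne with hlt | hgt
      · have h1 : φ b ω = 0 := if_neg (by omega)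
        have h2 : φ (b-1) ω = 0 := if_neg (by omega)
        rw [h1, h2]; ring
      · have h1 : φ b ω = 1 := if_pos (by omega)
        have h2 : φ (b-1) ω = 1 := if_pos (by omega)
        rw [h1, h2]; ring
  -- expansion helper
  have hexpand : ∀ f : ℕ → Ω → ℝ, (∀ k, k ≤ m → Measurable (f k)) →
      (∀ k ω, k ≤ m → 0 ≤ f k ω ∧ f k ω ≤ 1) →
      ∫ ω, (∑ k ∈ Finset.Icc 1 m, ((k:ℝ))⁻¹ * ((if X ω ≤ c * (k:ℝ) then (1:ℝ) else 0)
        * (f k ω - f (k-1) ω))) ∂μ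
      = ∑ k ∈ Finset.Icc 1 m, ((k:ℝ))⁻¹ *
          ((∫ ω, (if X ω ≤ c * (k:ℝ) then (1:ℝ) else 0) * f k ω ∂μ)
            - (∫ ω, (if X ω ≤ c * (k:ℝ) then (1:ℝ) else 0) * f (k-1) ω ∂μ)) := by
    intro f hfmeas hf01
    have hterm : ∀ k, 1 ≤ k → k ≤ m →
        (fun ω => ((k:ℝ))⁻¹ * ((if X ω ≤ c * (k:ℝ) then (1:ℝ) else 0) * (f k ω - f (k-1) ω)))
        = (fun ω => ((k:ℝ))⁻¹ * ((if X ω ≤ c * (k:ℝ) then (1:ℝ) else 0) * f k ω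
            - (if X ω ≤ c * (k:ℝ) then (1:ℝ) else 0) * f (k-1) ω)) := by
      intro k _ _
      funext ω
      ring
    rw [integral_finset_sum]
    · apply Finset.sum_congr rfl
      intro k hk
      rw [Finset.mem_Icc] at hk
      rw [hterm k hk.1 hk.2, integral_const_mul]
      congr 1
      exact integral_sub (hint_chi k (f k) (hfmeas k hk.2) (fun ω => hf01 k ω hk.2))
        (hint_chi k (f (k-1)) (hfmeas (k-1) (by omega)) (fun ω => hf01 (k-1) ω (by omega)))
    · intro k hk
      rw [Finset.mem_Icc] at hk
      rw [hterm k hk.1 hk.2]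
      apply Integrable.const_mul
      exact (hint_chi k (f k) (hfmeas k hk.2) (fun ω => hf01 k ω hk.2)).sub
        (hint_chi k (f (k-1)) (hfmeas (k-1) (by omega)) (fun ω => hf01 (k-1) ω (by omega)))
  -- final chain
  have hdmeasX : ∀ k, k ≤ m → Measurable (fun ω => d k (X ω)) :=
    fun k hk => ((hdu k hk).measurable).comp hX
  calc ∫ ω, (if X ω ≤ c * (U ω : ℝ) then ((U ω : ℝ))⁻¹ else 0) ∂μ
      = ∫ ω, (∑ k ∈ Finset.Icc 1 m, ((k:ℝ))⁻¹ * ((if X ω ≤ c * (k:ℝ) then (1:ℝ) else 0)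
          * (φ k ω - φ (k-1) ω))) ∂μ :=
        integral_congr_ae (Filter.Eventually.of_forall hsum)
  _ = ∑ k ∈ Finset.Icc 1 m, ((k:ℝ))⁻¹ *
        ((∫ ω, (if X ω ≤ c * (k:ℝ) then (1:ℝ) else 0) * φ k ω ∂μ)
          - (∫ ω, (if X ω ≤ c * (k:ℝ) then (1:ℝ) else 0) * φ (k-1) ω ∂μ)) :=
        hexpand φ (fun k _ => hφmeas k) (fun k ω _ => hφ01 k ω)
  _ = ∑ k ∈ Finset.Icc 1 m, ((k:ℝ))⁻¹ *
        ((∫ ω, (if X ω ≤ c * (k:ℝ) then (1:ℝ) else 0) * d k (X ω) ∂μ)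
          - (∫ ω, (if X ω ≤ c * (k:ℝ) then (1:ℝ) else 0) * d (k-1) (X ω) ∂μ)) := by
        apply Finset.sum_congr rfl
        intro k hk
        rw [Finset.mem_Icc] at hk
        rw [hkey k (c * (k:ℝ)) hk.2, hkey (k-1) (c * (k:ℝ)) (by omega)]
  _ = ∫ ω, (∑ k ∈ Finset.Icc 1 m, ((k:ℝ))⁻¹ * ((if X ω ≤ c * (k:ℝ) then (1:ℝ) else 0)
        * (d k (X ω) - d (k-1) (X ω)))) ∂μ :=
        (hexpand (fun k ω => d k (X ω)) hdmeasX (fun k ω hk => hd01 k hk (X ω))).symm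
  _ ≤ c := core μ m hm hc X hX hnullX d hd0 hdm hdu hdk hd01

end StepDownProofs

/-- Theorem A.1: if the p-values are PRDS on the true nulls (for each i ∈ I₀ and
each coordinatewise increasing function φ, E[φ(P)|P_i = u] is increasing in u),
each null p-value is stochastically dominated by Uniform[0,1], and the critical
values α_1 ≤ … ≤ α_m satisfy α_i/(1-α_i) = iq/(m-i+β) with β ≥ m(1-q),
then the step-down procedure has FDR ≤ m₀q/(β+mq) ≤ q. -/
theorem stmt_16 {Ω : Type*} [MeasurableSpace Ω] (μ : Measure Ω) [IsProbabilityMeasure μ]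
    (m : ℕ) (hm : 1 ≤ m) (q : ℝ) (hq0 : 0 < q) (hq1 : q < 1)
    (β : ℝ) (hβ : (m : ℝ) * (1 - q) ≤ β)
    (P : Fin m → Ω → ℝ) (hmeas : ∀ i, Measurable (P i))
    (hrange : ∀ i ω, P i ω ∈ Set.Icc (0 : ℝ) 1)
    (I₀ : Finset (Fin m))
    (hnull : ∀ i ∈ I₀, ∀ t : ℝ, 0 ≤ t → μ {ω | P i ω ≤ t} ≤ ENNReal.ofReal t)
    (hPRDS : ∀ i ∈ I₀, ∀ φ : (Fin m → ℝ) → ℝ, Measurable φ → Monotone φ →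
      (∀ p, |φ p| ≤ 1) →
      ∃ h : ℝ → ℝ, Monotone h ∧
        (fun ω => h (P i ω)) =ᵐ[μ]
          μ[(fun ω => φ (fun k => P k ω)) | MeasurableSpace.comap (P i) inferInstance])
    (α : ℕ → ℝ)
    (hαmono : ∀ a b : ℕ, 1 ≤ a → a ≤ b → b ≤ m → α a ≤ α b)
    (hα : ∀ i : ℕ, 1 ≤ i → i ≤ m →
      (0 < α i ∧ α i < 1) ∧
        α i / (1 - α i) = (i : ℝ) * q / ((m : ℝ) - (i : ℝ) + β)) :
    FDR μ m α I₀ P ≤ (I₀.card : ℝ) * q / (β + (m : ℝ) * q) ∧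
      (I₀.card : ℝ) * q / (β + (m : ℝ) * q) ≤ q := by
  classical
  have hm1 : (1:ℝ) ≤ (m:ℝ) := by exact_mod_cast hm
  have hden : (0:ℝ) < β + (m:ℝ) * q := by nlinarith
  set c : ℝ := q / (β + (m:ℝ) * q) with hcdef
  have hc : 0 < c := div_pos hq0 hden
  have hcard : (I₀.card : ℝ) ≤ (m:ℝ) := by
    have h1 := Finset.card_le_univ I₀
    have h2 : (Finset.univ : Finset (Fin m)).card = m := Finset.card_fin m
    exact_mod_cast le_trans h1 (le_of_eq h2)
  constructor
  · -- main FDR bound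
    have hαc : ∀ r : ℕ, 1 ≤ r → r ≤ m → α r ≤ c * r := by
      intro r h1 h2
      have := alpha_le hm hq0 hq1 hβ hα h1 h2
      rw [hcdef]
      exact this
    set pvec : Ω → (Fin m → ℝ) := fun ω i => P i ω with hpvec
    have hpvecm : Measurable pvec := measurable_pi_lambda _ hmeas
    set Rw : Ω → ℕ := fun ω => rejCount m α (pvec ω) with hRw
    have hRmeas : Measurable Rw := measurable_rejCount.comp hpvecm
    set U : Ω → ℕ := fun ω => max (Rw ω) 1 with hU
    have hUmeas : Measurable U := (measurable_of_countable (fun n : ℕ => max n 1)).comp hRmeas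
    have hU1 : ∀ ω, 1 ≤ U ω := fun ω => le_max_right _ _
    have hUm : ∀ ω, U ω ≤ m := by
      intro ω
      have h1 := rejCount_le (α := α) (pvec ω)
      simp only [hU, hRw]
      omega
    set ψ : Fin m → Ω → ℝ := fun i ω => if P i ω ≤ c * (U ω : ℝ) then ((U ω : ℝ))⁻¹ else 0 with hψ
    have hψmeas : ∀ i, Measurable (ψ i) := by
      intro i
      apply Measurable.ite _ _ measurable_const
      · exact measurableSet_le (hmeas i)
          ((measurable_of_countable (fun n : ℕ => c * (n:ℝ))).comp hUmeas)
      · exact (measurable_of_countable (fun n : ℕ => ((n:ℝ))⁻¹)).comp hUmeas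
    have hψint : ∀ i, Integrable (ψ i) μ := by
      intro i
      apply integrable_of_bdd (hψmeas i) (C := 1)
      intro ω
      simp only [hψ]
      split_ifs with h
      · have h1 : (1:ℝ) ≤ ((U ω : ℕ):ℝ) := by exact_mod_cast hU1 ω
        rw [abs_of_nonneg (by positivity)]
        exact inv_le_one_of_one_le₀ h1
      · simp
    set F0 : Ω → ℝ := fun ω => (if 0 < rejCount m α (fun i => P i ω) then
        (falseRejCount m α I₀ (fun i => P i ω) : ℝ) / (rejCount m α (fun i => P i ω) : ℝ)
        else 0) with hF0
    have hFDR : FDR μ m α I₀ P = ∫ ω, F0 ω ∂μ := rfl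
    set F1 : Ω → ℝ := fun ω => ∑ r ∈ Finset.Icc 1 m,
        (if Rw ω = r then (∑ i ∈ I₀, if P i ω ≤ α r then (1:ℝ) else 0) / (r:ℝ) else 0) with hF1
    have hRdefeq : ∀ ω, rejCount m α (fun i => P i ω) = Rw ω := fun ω => rfl
    have heq : ∀ ω, F0 ω = F1 ω := by
      intro ω
      simp only [hF0, hF1]
      by_cases h : 0 < rejCount m α (fun i => P i ω)
      · rw [if_pos h]
        have hmem : Rw ω ∈ Finset.Icc 1 m := by
          rw [Finset.mem_Icc]
          refine ⟨h, rejCount_le (α := α) (pvec ω)⟩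
        rw [Finset.sum_eq_single_of_mem (Rw ω) hmem]
        · rw [if_pos rfl]
          congr 1
          rw [falseRejCount, Finset.card_filter]
          push_cast
          rfl
        · intro b _ hbne
          exact if_neg (fun hcon => hbne hcon.symm)
      · rw [if_neg h]
        symm
        apply Finset.sum_eq_zero
        intro r hr
        rw [Finset.mem_Icc] at hr
        apply if_neg
        intro hcon
        rw [← hRdefeq ω] at hcon
        omega
    have hF1meas : Measurable F1 := by
      apply Finset.measurable_sum
      intro r _
      apply Measurable.ite (hRmeas (measurableSet_singleton r)) _ measurable_const
      apply Measurable.div_const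
      apply Finset.measurable_sum
      intro i _
      exact Measurable.ite (measurableSet_le (hmeas i) measurable_const)
        measurable_const measurable_const
    have hbd0 : ∀ ω, |F0 ω| ≤ (m:ℝ) := by
      intro ω
      simp only [hF0]
      split_ifs with h
      · have h1 : falseRejCount m α I₀ (fun i => P i ω) ≤ I₀.card :=
          Finset.card_filter_le _ _
        have h2 : I₀.card ≤ m := by
          simpa using Finset.card_le_univ I₀
        have hV : (falseRejCount m α I₀ (fun i => P i ω) : ℝ) ≤ (m:ℝ) := by
          exact_mod_cast le_trans h1 h2
        have hR : (1:ℝ) ≤ (rejCount m α (fun i => P i ω) : ℝ) := by exact_mod_cast h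
        rw [abs_of_nonneg (by positivity)]
        exact le_trans (div_le_self (by positivity) hR) hV
      · rw [abs_zero]
        exact_mod_cast Nat.zero_le m
    have hF1int : Integrable F1 μ := by
      apply integrable_of_bdd hF1meas (C := (m:ℝ))
      intro ω
      rw [← heq ω]
      exact hbd0 ω
    have hpt : ∀ ω, F1 ω ≤ ∑ i ∈ I₀, ψ i ω := by
      intro ω
      rw [← heq ω]
      exact pointwise_bound I₀ hαc (pvec ω)
    have hsumint : Integrable (fun ω => ∑ i ∈ I₀, ψ i ω) μ :=
      integrable_finset_sum _ (fun i _ => hψint i)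
    have hperi : ∀ i ∈ I₀, ∫ ω, ψ i ω ∂μ ≤ c := by
      intro i hi
      apply per_i μ m hm hc (P i) (hmeas i) (hnull i hi) U hUmeas hU1 hUm
      intro k hk1 hk2
      have hφmeas : Measurable (fun p : Fin m → ℝ =>
          if max (rejCount m α p) 1 ≤ k then (1:ℝ) else 0) := by
        apply Measurable.ite _ measurable_const measurable_const
        have h1 : Measurable (fun p : Fin m → ℝ => max (rejCount m α p) 1) :=
          (measurable_of_countable (fun n : ℕ => max n 1)).comp measurable_rejCount
        exact h1 ((Set.to_countable _).measurableSet : MeasurableSet (Set.Iic k))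
      have hφmono : Monotone (fun p : Fin m → ℝ =>
          if max (rejCount m α p) 1 ≤ k then (1:ℝ) else 0) := by
        intro p p' hpp'
        have hR' : rejCount m α p' ≤ rejCount m α p := rejCount_antitone hpp'
        by_cases h1 : max (rejCount m α p) 1 ≤ k
        · have h2 : max (rejCount m α p') 1 ≤ k := by omega
          simp [h1, h2]
        · simp only [if_neg h1]
          split_ifs <;> norm_num
      have hφbd : ∀ p : Fin m → ℝ, |if max (rejCount m α p) 1 ≤ k then (1:ℝ) else 0| ≤ 1 := by
        intro p
        split_ifs <;> norm_num
      obtain ⟨h, hmono, hae⟩ := hPRDS i hi _ hφmeas hφmono hφbd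
      exact ⟨h, hmono, hae⟩
    calc FDR μ m α I₀ P = ∫ ω, F1 ω ∂μ := by
          rw [hFDR]
          exact integral_congr_ae (Filter.Eventually.of_forall heq)
    _ ≤ ∫ ω, ∑ i ∈ I₀, ψ i ω ∂μ := integral_mono hF1int hsumint hpt
    _ = ∑ i ∈ I₀, ∫ ω, ψ i ω ∂μ := integral_finset_sum _ (fun i _ => hψint i)
    _ ≤ ∑ _i ∈ I₀, c := Finset.sum_le_sum hperi
    _ = (I₀.card : ℝ) * c := by rw [Finset.sum_const, nsmul_eq_mul]
    _ = (I₀.card : ℝ) * q / (β + (m:ℝ)*q) := by rw [hcdef, mul_div_assoc]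
  · rw [div_le_iff₀ hden]
    have h2 : (I₀.card:ℝ) ≤ β + (m:ℝ) * q := by nlinarith
    nlinarith [mul_le_mul_of_nonneg_right h2 hq0.le]
end

section
/- For the BH (linear step-up) procedure with independent p-values, null p-values Uniform[0,1], the FDR equals exactly q·m_0/m, where m_0 is the number of true nulls. -/
open MeasureTheory ProbabilityTheory

/-- Number of rejections of the BH (linear step-up) procedure at level q:
k = max{i : p_{(i)} ≤ iq/m} (0 if no such i). -/
noncomputable def bhCount (m : ℕ) (q : ℝ) (p : Fin m → ℝ) : ℕ :=
  sSup {i : ℕ | i = 0 ∨ ∃ h : i - 1 < m, orderStat p ⟨i - 1, h⟩ ≤ (i : ℝ) * q / (m : ℝ)}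

/-- counting function -/
noncomputable def G {m : ℕ} (p : Fin m → ℝ) (c : ℝ) : ℕ :=
  (Finset.univ.filter (fun j => p j ≤ c)).card

lemma G_mono {m : ℕ} (p : Fin m → ℝ) {c d : ℝ} (h : c ≤ d) : G p c ≤ G p d := by
  apply Finset.card_le_card
  intro j hj
  simp only [Finset.mem_filter] at *
  exact ⟨hj.1, hj.2.trans h⟩

lemma orderStat_le_iff_s17 {m : ℕ} (p : Fin m → ℝ) (k : ℕ) (hk : k < m) (t : ℝ) :
    orderStat p ⟨k, hk⟩ ≤ t ↔ k < G p t := by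
  have hmono : Monotone (p ∘ Tuple.sort p) := Tuple.monotone_sort p
  have hGe : G p t = (Finset.univ.filter (fun j => (p ∘ Tuple.sort p) j ≤ t)).card := by
    unfold G
    apply Finset.card_bij' (fun j _ => (Tuple.sort p).symm j) (fun j _ => Tuple.sort p j)
    · intro a ha
      simp only [Finset.mem_filter, Finset.mem_univ, true_and, Function.comp_apply,
        Equiv.apply_symm_apply] at *
      exact ha
    · intro a ha
      simp only [Finset.mem_filter, Finset.mem_univ, true_and, Function.comp_apply] at *
      exact ha
    · intro a _; simp
    · intro a _; simp
  rw [hGe]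
  constructor
  · intro h
    have hsub : (Finset.univ.filter (fun j : Fin m => (j : ℕ) ≤ k)) ⊆
        (Finset.univ.filter (fun j => (p ∘ Tuple.sort p) j ≤ t)) := by
      intro j hj
      simp only [Finset.mem_filter, Finset.mem_univ, true_and] at *
      exact le_trans (hmono (show j ≤ ⟨k, hk⟩ from hj)) h
    calc k < k + 1 := Nat.lt_succ_self k
    _ = (Finset.univ.filter (fun j : Fin m => (j : ℕ) ≤ k)).card := by
        have : Finset.univ.filter (fun j : Fin m => (j : ℕ) ≤ k) = Finset.Iic ⟨k, hk⟩ := by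
          ext j; simp [Fin.le_def]
        rw [this, Fin.card_Iic]
    _ ≤ _ := Finset.card_le_card hsub
  · intro h
    by_contra hlt
    push_neg at hlt
    have : (Finset.univ.filter (fun j => (p ∘ Tuple.sort p) j ≤ t)) ⊆
        (Finset.univ.filter (fun j : Fin m => (j : ℕ) < k)) := by
      intro j hj
      simp only [Finset.mem_filter, Finset.mem_univ, true_and] at *
      by_contra hjk
      push_neg at hjk
      exact absurd (le_trans (hmono (show (⟨k, hk⟩ : Fin m) ≤ j from hjk)) hj) (not_le.mpr hlt)
    have hcard := Finset.card_le_card this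
    have : (Finset.univ.filter (fun j : Fin m => (j : ℕ) < k)).card ≤ k := by
      have heq : Finset.univ.filter (fun j : Fin m => (j : ℕ) < k) = Finset.Iio ⟨k, hk⟩ := by
        ext j; simp [Fin.lt_def]
      rw [heq, Fin.card_Iio]
    omega

/-- membership set for bhCount -/
lemma bhCount_set_eq (m : ℕ) (q : ℝ) (p : Fin m → ℝ) :
    {i : ℕ | i = 0 ∨ ∃ h : i - 1 < m, orderStat p ⟨i - 1, h⟩ ≤ (i : ℝ) * q / (m : ℝ)}
    = {k : ℕ | k = 0 ∨ (k ≤ m ∧ k ≤ G p ((k : ℝ) * q / (m : ℝ)))} := by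
  ext i
  simp only [Set.mem_setOf_eq]
  rcases Nat.eq_zero_or_pos i with h0 | hpos
  · simp [h0]
  · constructor
    · rintro (h | ⟨h, hle⟩)
      · omega
      · right
        refine ⟨by omega, ?_⟩
      -- orderStat p ⟨i-1⟩ ≤ c ↔ i-1 < G, and i-1 < G ↔ i ≤ G
        have := (orderStat_le_iff_s17 p (i-1) h _).mp hle
        omega
    · rintro (h | ⟨h, hle⟩)
      · omega
      · right
        refine ⟨by omega, (orderStat_le_iff_s17 p (i-1) (by omega) _).mpr (by omega)⟩

section BH
variable {m : ℕ} (q : ℝ)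

/-- The BH membership set. -/
def bhSet (m : ℕ) (q : ℝ) (p : Fin m → ℝ) : Set ℕ :=
  {k : ℕ | k = 0 ∨ (k ≤ m ∧ k ≤ G p ((k : ℝ) * q / (m : ℝ)))}

lemma bhCount_eq_sSup (p : Fin m → ℝ) : bhCount m q p = sSup (bhSet m q p) := by
  unfold bhCount bhSet
  rw [bhCount_set_eq]

lemma bhSet_zero_mem (p : Fin m → ℝ) : 0 ∈ bhSet m q p := Or.inl rfl

lemma bhSet_bddAbove (p : Fin m → ℝ) : BddAbove (bhSet m q p) := by
  refine ⟨m, fun k hk => ?_⟩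
  rcases hk with h | h
  · omega
  · exact h.1

lemma bhCount_mem (p : Fin m → ℝ) : bhCount m q p ∈ bhSet m q p := by
  rw [bhCount_eq_sSup]
  exact Nat.sSup_mem ⟨0, bhSet_zero_mem q p⟩ (bhSet_bddAbove q p)

lemma le_bhCount (p : Fin m → ℝ) {k : ℕ} (hk : k ∈ bhSet m q p) : k ≤ bhCount m q p := by
  rw [bhCount_eq_sSup]
  exact le_csSup (bhSet_bddAbove q p) hk

lemma bhCount_le (p : Fin m → ℝ) : bhCount m q p ≤ m := by
  rcases bhCount_mem q p with h | h
  · omega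
  · exact h.1

lemma G_update_le (p : Fin m → ℝ) (i : Fin m) {c : ℝ} (hc : 0 ≤ c) :
    G p c ≤ G (Function.update p i 0) c := by
  apply Finset.card_le_card
  intro j hj
  simp only [Finset.mem_filter, Finset.mem_univ, true_and] at *
  rcases eq_or_ne j i with rfl | hne
  · simpa using hc
  · rwa [Function.update_of_ne hne]

lemma G_update_eq (p : Fin m → ℝ) (i : Fin m) {c : ℝ} (hc : 0 ≤ c) (hpi : p i ≤ c) :
    G (Function.update p i 0) c = G p c := by
  unfold G
  congr 1
  apply Finset.filter_congr
  intro j _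
  rcases eq_or_ne j i with rfl | hne
  · simp [hpi, hc]
  · rw [Function.update_of_ne hne]

/-- Leave-one-out key lemma. -/
lemma bhCount_update (hq0 : 0 < q) (p : Fin m → ℝ) (i : Fin m) {k : ℕ} (hk1 : 1 ≤ k)
    (hpi : p i ≤ (k : ℝ) * q / (m : ℝ)) :
    bhCount m q p = k ↔ bhCount m q (Function.update p i 0) = k := by
  have hm0 : (0 : ℝ) ≤ (m : ℝ) := Nat.cast_nonneg m
  have hck : 0 ≤ (k : ℝ) * q / (m : ℝ) :=
    div_nonneg (mul_nonneg (Nat.cast_nonneg k) hq0.le) hm0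
  set p' := Function.update p i 0 with hp'
  constructor
  · intro hR
    have hmem := bhCount_mem q p
    rw [hR] at hmem
    rcases hmem with h | ⟨hkm, hG⟩
    · omega
    have hG' : k ≤ G p' ((k : ℝ) * q / (m : ℝ)) := by
      rw [G_update_eq p i hck hpi]; exact hG
    have hle : k ≤ bhCount m q p' := le_bhCount q p' (Or.inr ⟨hkm, hG'⟩)
    rcases lt_or_eq_of_le hle with hlt | heq
    · exfalso
      set k' := bhCount m q p' with hk'
      have hmem' := bhCount_mem q p'
      rcases hmem' with h | ⟨hk'm, hG'⟩
      · omega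
      have hkk' : ((k : ℝ) * q / (m : ℝ)) ≤ ((k' : ℝ) * q / (m : ℝ)) := by
        have : (k:ℝ) ≤ (k':ℝ) := by exact_mod_cast hlt.le
        gcongr
      have hGeq : G p' ((k' : ℝ) * q / (m : ℝ)) = G p ((k' : ℝ) * q / (m : ℝ)) :=
        G_update_eq p i (hck.trans hkk') (hpi.trans hkk')
      have : k' ≤ bhCount m q p := le_bhCount q p (Or.inr ⟨hk'm, hGeq ▸ hG'⟩)
      omega
    · omega
  · intro hR
    have hmem := bhCount_mem q p'
    rw [hR] at hmem
    rcases hmem with h | ⟨hkm, hG'⟩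
    · omega
    have hG : k ≤ G p ((k : ℝ) * q / (m : ℝ)) := by
      rw [← G_update_eq p i hck hpi]; exact hG'
    have hle : k ≤ bhCount m q p := le_bhCount q p (Or.inr ⟨hkm, hG⟩)
    rcases lt_or_eq_of_le hle with hlt | heq
    · exfalso
      set k' := bhCount m q p with hk'
      have hmem2 := bhCount_mem q p
      rcases hmem2 with h | ⟨hk'm, hG2⟩
      · omega
      have hkk' : ((k : ℝ) * q / (m : ℝ)) ≤ ((k' : ℝ) * q / (m : ℝ)) := by
        have : (k:ℝ) ≤ (k':ℝ) := by exact_mod_cast hlt.le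
        gcongr
      have hG2' : (k' : ℕ) ≤ G p' ((k' : ℝ) * q / (m : ℝ)) :=
        le_trans hG2 (G_update_le p i (hck.trans hkk'))
      have : k' ≤ bhCount m q p' := le_bhCount q p' (Or.inr ⟨hk'm, hG2'⟩)
      omega
    · omega

end BH

section BH2
variable {m : ℕ} (q : ℝ)

lemma one_le_bhCount_update (hm : 1 ≤ m) (hq0 : 0 < q) (p : Fin m → ℝ) (i : Fin m) :
    1 ≤ bhCount m q (Function.update p i 0) := by
  apply le_bhCount
  refine Or.inr ⟨hm, ?_⟩
  have : i ∈ Finset.univ.filter (fun j => Function.update p i 0 j ≤ (1 : ℝ) * q / (m : ℝ)) := by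
    simp only [Finset.mem_filter, Finset.mem_univ, true_and, Function.update_self, one_mul]
    positivity
  rw [Nat.cast_one]
  unfold G
  exact Finset.card_pos.mpr ⟨i, this⟩

lemma bhCount_eq_iff (p : Fin m → ℝ) (k : ℕ) :
    bhCount m q p = k ↔ k ∈ bhSet m q p ∧ ∀ k' ∈ bhSet m q p, k' ≤ k := by
  constructor
  · rintro rfl
    exact ⟨bhCount_mem q p, fun k' hk' => le_bhCount q p hk'⟩
  · rintro ⟨h1, h2⟩
    exact le_antisymm (h2 _ (bhCount_mem q p)) (le_bhCount q p h1)

lemma measurable_G (c : ℝ) : Measurable (fun p : Fin m → ℝ => G p c) := by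
  unfold G
  simp_rw [Finset.card_filter]
  apply Finset.measurable_sum
  intro j _
  apply Measurable.ite ?_ measurable_const measurable_const
  exact measurableSet_le (measurable_pi_apply j) measurable_const

lemma measurable_bhCount : Measurable (fun p : Fin m → ℝ => bhCount m q p) := by
  apply measurable_to_countable'
  intro k
  have : (fun p : Fin m → ℝ => bhCount m q p) ⁻¹' {k} =
      {p : Fin m → ℝ | k ∈ bhSet m q p ∧ ∀ k' ∈ bhSet m q p, k' ≤ k} := by
    ext p
    simp only [Set.mem_preimage, Set.mem_singleton_iff, Set.mem_setOf_eq]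
    exact bhCount_eq_iff q p k
  rw [this]
  have hset : ∀ k' : ℕ, MeasurableSet {p : Fin m → ℝ | k' ∈ bhSet m q p} := by
    intro k'
    have : {p : Fin m → ℝ | k' ∈ bhSet m q p} =
        {p : Fin m → ℝ | k' = 0} ∪ ({p | k' ≤ m} ∩ {p | k' ≤ G p ((k' : ℝ) * q / (m : ℝ))}) := by
      ext p; rfl
    rw [this]
    apply MeasurableSet.union
    · by_cases h : k' = 0 <;> simp [h]
    apply MeasurableSet.inter
    · by_cases h : k' ≤ m <;> simp [h]
    · exact measurableSet_le measurable_const (measurable_G ((k' : ℝ) * q / (m : ℝ)))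
  have : {p : Fin m → ℝ | k ∈ bhSet m q p ∧ ∀ k' ∈ bhSet m q p, k' ≤ k} =
      {p : Fin m → ℝ | k ∈ bhSet m q p} ∩ ⋂ k' ∈ Set.Ici (k+1), {p : Fin m → ℝ | k' ∈ bhSet m q p}ᶜ := by
    ext p
    simp only [Set.mem_setOf_eq, Set.mem_inter_iff, Set.mem_iInter, Set.mem_compl_iff, Set.mem_Ici]
    constructor
    · rintro ⟨h1, h2⟩
      exact ⟨h1, fun k' hk' hmem => by have := h2 k' hmem; omega⟩
    · rintro ⟨h1, h2⟩
      refine ⟨h1, fun k' hmem => ?_⟩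
      by_contra h
      exact h2 k' (by omega) hmem
  rw [this]
  exact (hset k).inter (MeasurableSet.biInter (Set.to_countable _) fun k' _ => (hset k').compl)

end BH2

/-- Number of falsely rejected (true null) hypotheses for BH: H_i is rejected iff
P_i ≤ Rq/m, i.e. iff P_i is among the R smallest p-values. -/
noncomputable def bhFalseRejCount (m : ℕ) (q : ℝ) (I₀ : Finset (Fin m))
    (p : Fin m → ℝ) : ℕ :=
  (I₀.filter fun i => p i ≤ (bhCount m q p : ℝ) * q / (m : ℝ)).card

/-- FDR of the BH procedure: E[(V/R) 1_{R>0}]. -/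
noncomputable def bhFDR {Ω : Type*} [MeasurableSpace Ω] (μ : Measure Ω)
    (m : ℕ) (q : ℝ) (I₀ : Finset (Fin m)) (P : Fin m → Ω → ℝ) : ℝ :=
  ∫ ω, (if 0 < bhCount m q (fun i => P i ω) then
    (bhFalseRejCount m q I₀ (fun i => P i ω) : ℝ) / (bhCount m q (fun i => P i ω) : ℝ)
    else 0) ∂μ

/-- For the BH procedure with independent p-values, the null ones Uniform[0,1],
the FDR equals exactly q·m₀/m. -/
theorem stmt_17 {Ω : Type*} [MeasurableSpace Ω] (μ : Measure Ω) [IsProbabilityMeasure μ]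
    (m : ℕ) (hm : 1 ≤ m) (q : ℝ) (hq0 : 0 < q) (hq1 : q ≤ 1)
    (P : Fin m → Ω → ℝ) (hmeas : ∀ i, Measurable (P i))
    (hrange : ∀ i ω, P i ω ∈ Set.Icc (0 : ℝ) 1)
    (hindep : iIndepFun P μ)
    (I₀ : Finset (Fin m))
    (hunif : ∀ i ∈ I₀, μ.map (P i) = volume.restrict (Set.Icc (0 : ℝ) 1)) :
    bhFDR μ m q I₀ P = q * (I₀.card : ℝ) / (m : ℝ) := by
  classical
  have hmR : (0 : ℝ) < (m : ℝ) := by exact_mod_cast hm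
  -- the events
  set A : ℕ → Fin m → Set Ω := fun k i =>
    {ω | bhCount m q (fun j => P j ω) = k ∧ P i ω ≤ (k : ℝ) * q / (m : ℝ)} with hA
  -- measurability of ω ↦ p-value vector
  have hPvec : Measurable (fun ω => (fun j => P j ω)) :=
    measurable_pi_lambda _ (fun j => hmeas j)
  have hAmeas : ∀ k i, MeasurableSet (A k i) := by
    intro k i
    have h1 : MeasurableSet {ω | bhCount m q (fun j => P j ω) = k} :=
      ((measurable_bhCount q).comp hPvec) (measurableSet_singleton k)
    have h2 : MeasurableSet {ω | P i ω ≤ (k : ℝ) * q / (m : ℝ)} :=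
      measurableSet_le (hmeas i) measurable_const
    exact h1.inter h2
  -- Step 1: pointwise identity
  have hpt : ∀ ω, (if 0 < bhCount m q (fun i => P i ω) then
      (bhFalseRejCount m q I₀ (fun i => P i ω) : ℝ) / (bhCount m q (fun i => P i ω) : ℝ)
      else 0) =
      ∑ k ∈ Finset.Icc 1 m, ∑ i ∈ I₀, (A k i).indicator (fun _ => (k : ℝ)⁻¹) ω := by
    intro ω
    set R := bhCount m q (fun j => P j ω) with hR
    rcases Nat.eq_zero_or_pos R with h0 | hpos
    · rw [if_neg (by omega)]
      symm
      apply Finset.sum_eq_zero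
      intro k hk
      apply Finset.sum_eq_zero
      intro i _
      simp only [Finset.mem_Icc] at hk
      rw [Set.indicator_of_notMem]
      rw [hA]
      simp only [Set.mem_setOf_eq, not_and]
      intro hc
      exfalso
      rw [← hR] at hc
      omega
    · rw [if_pos hpos]
      have hRm : R ≤ m := bhCount_le q _
      rw [Finset.sum_eq_single_of_mem R (Finset.mem_Icc.mpr ⟨hpos, hRm⟩)]
      · have : ∀ i ∈ I₀, (A R i).indicator (fun _ => (R : ℝ)⁻¹) ω =
            if P i ω ≤ (R : ℝ) * q / (m : ℝ) then (R : ℝ)⁻¹ else 0 := by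
          intro i _
          rw [Set.indicator_apply]
          congr 1
          simp only [hA, Set.mem_setOf_eq, ← hR, eq_self_iff_true, true_and]
        rw [Finset.sum_congr rfl this, Finset.sum_ite, Finset.sum_const, Finset.sum_const,
          smul_zero, add_zero]
        rw [bhFalseRejCount, div_eq_mul_inv, ← hR]
        simp [mul_comm]
      · intro k hk hne
        apply Finset.sum_eq_zero
        intro i _
        rw [Set.indicator_of_notMem]
        simp only [hA, Set.mem_setOf_eq, not_and, ← hR]
        intro hc
        exact absurd hc.symm hne -- R = k contradiction
  -- Step 2: integral of the simple function
  have hint : bhFDR μ m q I₀ P =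
      ∑ k ∈ Finset.Icc 1 m, ∑ i ∈ I₀, (k : ℝ)⁻¹ * (μ (A k i)).toReal := by
    rw [bhFDR]
    rw [integral_congr_ae (Filter.Eventually.of_forall hpt)]
    rw [integral_finset_sum]
    · apply Finset.sum_congr rfl
      intro k _
      rw [integral_finset_sum]
      · apply Finset.sum_congr rfl
        intro i _
        rw [integral_indicator_const _ (hAmeas k i)]
        simp [mul_comm, measureReal_def]
      · intro i _
        exact (integrable_const _).indicator (hAmeas k i)
    · intro k _
      apply integrable_finset_sum
      intro i _
      exact (integrable_const _).indicator (hAmeas k i)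
  -- Step 3: compute the measure of A k i via independence
  have hmuA : ∀ k ∈ Finset.Icc 1 m, ∀ i ∈ I₀,
      μ (A k i) = ENNReal.ofReal ((k : ℝ) * q / (m : ℝ)) *
        μ {ω | bhCount m q (Function.update (fun j => P j ω) i 0) = k} := by
    intro k hk i hi
    simp only [Finset.mem_Icc] at hk
    -- rewrite A k i using the leave-one-out lemma
    have hArw : A k i = {ω | P i ω ≤ (k : ℝ) * q / (m : ℝ)} ∩
        {ω | bhCount m q (Function.update (fun j => P j ω) i 0) = k} := by
      ext ω
      simp only [hA, Set.mem_setOf_eq, Set.mem_inter_iff]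
      constructor
      · rintro ⟨h1, h2⟩
        exact ⟨h2, (bhCount_update q hq0 _ i hk.1 h2).mp h1⟩
      · rintro ⟨h2, h1⟩
        exact ⟨(bhCount_update q hq0 _ i hk.1 h2).mpr h1, h2⟩
    rw [hArw]
    -- independence
    have h_le : ∀ j, MeasurableSpace.comap (P j) inferInstance ≤ _ := fun j => (hmeas j).comap_le
    have hIndep := indep_biSup_compl h_le hindep {i}
    have hIndep2 : Indep (MeasurableSpace.comap (P i) inferInstance)
        (⨆ j ∈ ({i} : Set (Fin m))ᶜ, MeasurableSpace.comap (P j) inferInstance) μ := by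
      apply indep_of_indep_of_le_left hIndep
      exact le_biSup (fun n => MeasurableSpace.comap (P n) inferInstance) (Set.mem_singleton i)
    have hB : MeasurableSet[MeasurableSpace.comap (P i) inferInstance]
        {ω | P i ω ≤ (k : ℝ) * q / (m : ℝ)} :=
      ⟨Set.Iic ((k : ℝ) * q / (m : ℝ)), measurableSet_Iic, rfl⟩
    have hC : MeasurableSet[⨆ j ∈ ({i} : Set (Fin m))ᶜ, MeasurableSpace.comap (P j) inferInstance]
        {ω | bhCount m q (Function.update (fun j => P j ω) i 0) = k} := by
      have hg : Measurable[⨆ j ∈ ({i} : Set (Fin m))ᶜ, MeasurableSpace.comap (P j) inferInstance]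
          (fun ω => Function.update (fun j => P j ω) i 0) := by
        letI : MeasurableSpace Ω := ⨆ j ∈ ({i} : Set (Fin m))ᶜ,
          MeasurableSpace.comap (P j) inferInstance
        refine measurable_pi_iff.mpr (fun j => ?_)
        rcases eq_or_ne j i with rfl | hne
        · simp only [Function.update_self]
          exact measurable_const
        · simp only [Function.update_of_ne hne]
          have h1 : Measurable[MeasurableSpace.comap (P j) inferInstance] (P j) :=
            Measurable.of_comap_le le_rfl
          exact h1.mono (le_biSup (f := fun j : Fin m =>
            MeasurableSpace.comap (P j) inferInstance) (by simpa using hne)) le_rfl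
      exact ((measurable_bhCount q).comp hg) (measurableSet_singleton k)
    have := (Indep_iff _ _ μ).mp hIndep2 _ _ hB hC
    rw [this]
    congr 1
    -- μ {P i ≤ c} = ofReal c
    have hc0 : 0 ≤ (k : ℝ) * q / (m : ℝ) := by positivity
    have hc1 : (k : ℝ) * q / (m : ℝ) ≤ 1 := by
      rw [div_le_one hmR]
      have hkm : (k : ℝ) ≤ (m : ℝ) := by exact_mod_cast hk.2
      nlinarith
    have : {ω | P i ω ≤ (k : ℝ) * q / (m : ℝ)} = P i ⁻¹' Set.Iic ((k : ℝ) * q / (m : ℝ)) := rfl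
    rw [this, ← Measure.map_apply (hmeas i) measurableSet_Iic, hunif i hi,
      Measure.restrict_apply measurableSet_Iic]
    have : Set.Iic ((k : ℝ) * q / (m : ℝ)) ∩ Set.Icc (0 : ℝ) 1 = Set.Icc 0 ((k : ℝ) * q / (m : ℝ)) := by
      ext x
      simp only [Set.mem_inter_iff, Set.mem_Iic, Set.mem_Icc]
      constructor
      · rintro ⟨h1, h2, h3⟩; exact ⟨h2, h1⟩
      · rintro ⟨h1, h2⟩; exact ⟨h2, h1, h2.trans hc1⟩
    rw [this, Real.volume_Icc, sub_zero]
  -- Step 4: sum everything up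
  set C : Fin m → ℕ → Set Ω := fun i k =>
    {ω | bhCount m q (Function.update (fun j => P j ω) i 0) = k} with hCdef
  have hCmeas : ∀ i k, MeasurableSet (C i k) := by
    intro i k
    have hg : Measurable (fun ω => Function.update (fun j => P j ω) i 0) := by
      apply measurable_pi_lambda
      intro j
      rcases eq_or_ne j i with rfl | hne
      · simp only [Function.update_self]; exact measurable_const
      · simp only [Function.update_of_ne hne]; exact hmeas j
    exact ((measurable_bhCount q).comp hg) (measurableSet_singleton k)
  have hone : ∀ i : Fin m, ∑ k ∈ Finset.Icc 1 m, (μ (C i k)).toReal = 1 := by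
    intro i
    rw [← ENNReal.toReal_sum (fun k _ => measure_ne_top μ _)]
    have hdisj : Set.PairwiseDisjoint (↑(Finset.Icc 1 m)) (C i) := by
      intro k _ k' _ hne
      apply Set.disjoint_left.mpr
      intro ω h1 h2
      simp only [hCdef, Set.mem_setOf_eq] at h1 h2
      exact hne (h1 ▸ h2.symm ▸ rfl)
    rw [← measure_biUnion_finset hdisj (fun k _ => hCmeas i k)]
    have huniv : ⋃ k ∈ Finset.Icc 1 m, C i k = Set.univ := by
      ext ω
      simp only [Set.mem_iUnion, Set.mem_univ, iff_true, Finset.mem_Icc, hCdef,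
        Set.mem_setOf_eq]
      exact ⟨bhCount m q (Function.update (fun j => P j ω) i 0),
        ⟨one_le_bhCount_update q hm hq0 _ i, bhCount_le q _⟩, rfl⟩
    rw [huniv, measure_univ, ENNReal.toReal_one]
  rw [hint, Finset.sum_comm]
  have : ∀ i ∈ I₀, ∑ k ∈ Finset.Icc 1 m, (k : ℝ)⁻¹ * (μ (A k i)).toReal = q / (m : ℝ) := by
    intro i hi
    have : ∀ k ∈ Finset.Icc 1 m, (k : ℝ)⁻¹ * (μ (A k i)).toReal
        = (q / (m : ℝ)) * (μ (C i k)).toReal := by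
      intro k hk
      rw [hmuA k hk i hi]
      have hk1 : 1 ≤ k := (Finset.mem_Icc.mp hk).1
      have hkR : ((k : ℝ)) ≠ 0 := by positivity
      rw [ENNReal.toReal_mul, ENNReal.toReal_ofReal (by positivity)]
      field_simp
      ring
    rw [Finset.sum_congr rfl this, ← Finset.mul_sum, hone i, mul_one]
  rw [Finset.sum_congr rfl this, Finset.sum_const, nsmul_eq_mul]
  ring
end
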